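/- arXiv:1402.2495 — 5 statements merged into one kernel-verified Lean document; each statement's English description precedes it below -/
import Mathlib

section
/- Let F : ℝ^m → ℝ^m be locally Lipschitz and suppose F(u₁,...,u_m)·(u₁,0,...,0) > 0 whenever u₁ > L, for some constant L ≥ 0. If u ∈ C²(ℝⁿ; ℝ^m) is a bounded entire solution of Δu = F(u) on ℝⁿ, then the first component satisfies u₁(x) ≤ L for all x ∈ ℝⁿ. -/
/-- Componentwise Laplacian of a map `ℝⁿ → ℝᵐ`. -/
noncomputable def vectorLaplacian {n m : ℕ}
    (u : EuclideanSpace ℝ (Fin n) → EuclideanSpace ℝ (Fin m))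
    (x : EuclideanSpace ℝ (Fin n)) : EuclideanSpace ℝ (Fin m) :=
  ∑ i : Fin n, fderiv ℝ (fun y => fderiv ℝ u y (EuclideanSpace.single i 1)) x
    (EuclideanSpace.single i 1)

/-- Second derivative test (necessary condition): at a global max, second deriv ≤ 0. -/
lemma second_deriv_nonpos_of_max (f f' : ℝ → ℝ) (c : ℝ)
    (hf : ∀ t, HasDerivAt f (f' t) t) (hf' : HasDerivAt f' c 0)
    (hmax : ∀ t, f t ≤ f 0) : c ≤ 0 := by
  by_contra hc
  push_neg at hc
  have hmax' : IsLocalMax f 0 := Filter.Eventually.of_forall hmax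
  have h0 : f' 0 = 0 := hmax'.hasDerivAt_eq_zero (hf 0)
  -- slope of f' tends to c
  have hslope : Filter.Tendsto (slope f' 0) (nhdsWithin 0 {(0:ℝ)}ᶜ) (nhds c) :=
    hasDerivAt_iff_tendsto_slope.1 hf'
  have hslope' : Filter.Tendsto (slope f' 0) (nhdsWithin 0 (Set.Ioi 0)) (nhds c) :=
    hslope.mono_left (nhdsWithin_mono _ (fun t ht => ne_of_gt ht))
  have hev : ∀ᶠ t in nhdsWithin 0 (Set.Ioi 0), 0 < slope f' 0 t :=
    hslope'.eventually (eventually_gt_nhds hc)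
  rw [eventually_nhdsWithin_iff, Metric.eventually_nhds_iff] at hev
  obtain ⟨η, hη, hev⟩ := hev
  have hpos : ∀ t ∈ Set.Ioo (0:ℝ) η, 0 < f' t := by
    intro t ht
    have h1 : 0 < slope f' 0 t := by
      apply hev (y := t) _ ht.1
      simp [abs_of_pos ht.1, ht.2]
    rw [slope_def_field, h0, sub_zero, sub_zero, div_pos_iff] at h1
    rcases h1 with ⟨h, _⟩ | ⟨_, h⟩
    · exact h
    · exact absurd ht.1 (not_lt.2 h.le)
  have hmono : StrictMonoOn f (Set.Icc 0 (η/2)) := by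
    apply strictMonoOn_of_deriv_pos (convex_Icc _ _)
    · exact fun x _ => ((hf x).differentiableAt.continuousAt).continuousWithinAt
    · intro x hx
      rw [interior_Icc] at hx
      rw [(hf x).deriv]
      exact hpos x ⟨hx.1, lt_of_lt_of_le hx.2 (by linarith)⟩
  have : f 0 < f (η/2) := by
    apply hmono (Set.left_mem_Icc.2 (by linarith)) (Set.right_mem_Icc.2 (by linarith))
    linarith
  exact absurd (hmax (η/2)) (not_le.2 this)

variable {n : ℕ}

lemma line_hasDerivAt (x₀ w : EuclideanSpace ℝ (Fin n)) (t : ℝ) :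
    HasDerivAt (fun s : ℝ => x₀ + s • w) w t := by
  simpa using ((hasDerivAt_id t).smul_const w).const_add x₀

lemma line_first_deriv (v : EuclideanSpace ℝ (Fin n) → ℝ) (hv : ContDiff ℝ 2 v)
    (x₀ w : EuclideanSpace ℝ (Fin n)) (t : ℝ) :
    HasDerivAt (fun s : ℝ => v (x₀ + s • w)) (fderiv ℝ v (x₀ + t • w) w) t :=
  ((hv.differentiable (by norm_num)) (x₀ + t • w)).hasFDerivAt.comp_hasDerivAt t
    (line_hasDerivAt x₀ w t)

lemma contDiff_fderiv_apply (v : EuclideanSpace ℝ (Fin n) → ℝ) (hv : ContDiff ℝ 2 v)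
    (w : EuclideanSpace ℝ (Fin n)) :
    ContDiff ℝ 1 (fun y => fderiv ℝ v y w) :=
  (hv.fderiv_right (m := 1) (by norm_num)).clm_apply contDiff_const

lemma line_second_deriv (v : EuclideanSpace ℝ (Fin n) → ℝ) (hv : ContDiff ℝ 2 v)
    (x₀ w : EuclideanSpace ℝ (Fin n)) :
    HasDerivAt (fun t : ℝ => fderiv ℝ v (x₀ + t • w) w)
      (fderiv ℝ (fun y => fderiv ℝ v y w) x₀ w) 0 := by
  have hg := contDiff_fderiv_apply v hv w
  have h := ((hg.differentiable (by norm_num)) (x₀ + (0:ℝ) • w)).hasFDerivAt.comp_hasDerivAt 0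
    (line_hasDerivAt x₀ w 0)
  simp only [zero_smul, add_zero] at h
  exact h


variable {n m : ℕ}

lemma contDiff_fderiv_apply' {E F : Type*} [NormedAddCommGroup E] [NormedSpace ℝ E]
    [NormedAddCommGroup F] [NormedSpace ℝ F]
    (u : E → F) (hu : ContDiff ℝ 2 u) (w : E) :
    ContDiff ℝ 1 (fun y => fderiv ℝ u y w) :=
  (hu.fderiv_right (m := 1) (by norm_num)).clm_apply contDiff_const

lemma laplacian_comp_proj (j : Fin m)
    (u : EuclideanSpace ℝ (Fin n) → EuclideanSpace ℝ (Fin m)) (hu : ContDiff ℝ 2 u)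
    (x : EuclideanSpace ℝ (Fin n)) :
    ∑ i : Fin n, fderiv ℝ
      (fun y => fderiv ℝ (fun z => EuclideanSpace.proj j (u z)) y (EuclideanSpace.single i 1)) x
      (EuclideanSpace.single i 1) = vectorLaplacian u x j := by
  set P := EuclideanSpace.proj (𝕜 := ℝ) j
  have hud : Differentiable ℝ u := hu.differentiable (by norm_num)
  have h1 : ∀ y, fderiv ℝ (fun z => P (u z)) y = P.comp (fderiv ℝ u y) := by
    intro y
    exact (P.hasFDerivAt.comp y (hud y).hasFDerivAt).fderiv
  have h2 : ∀ i : Fin n, fderiv ℝ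
      (fun y => fderiv ℝ (fun z => P (u z)) y (EuclideanSpace.single i 1)) x
      (EuclideanSpace.single i 1)
      = P (fderiv ℝ (fun y => fderiv ℝ u y (EuclideanSpace.single i 1)) x
          (EuclideanSpace.single i 1)) := by
    intro i
    have heq : (fun y => fderiv ℝ (fun z => P (u z)) y (EuclideanSpace.single i 1))
        = fun y => P (fderiv ℝ u y (EuclideanSpace.single i 1)) := by
      funext y; rw [h1 y]; rfl
    rw [heq]
    have hh : DifferentiableAt ℝ (fun y => fderiv ℝ u y (EuclideanSpace.single i 1)) x :=
      ((contDiff_fderiv_apply' u hu _).differentiable (by norm_num)) x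
    exact congrFun (congrArg _ (P.hasFDerivAt.comp x hh.hasFDerivAt).fderiv) _
  simp only [h2]
  rw [← map_sum]
  rfl

set_option maxHeartbeats 1000000 in
theorem component_bound_lemma {n m : ℕ} (hm : 0 < m)
    (F : EuclideanSpace ℝ (Fin m) → EuclideanSpace ℝ (Fin m))
    (hF : LocallyLipschitz F) (L : ℝ) (hL : 0 ≤ L)
    (hsign : ∀ u : EuclideanSpace ℝ (Fin m), u ⟨0, hm⟩ > L → F u ⟨0, hm⟩ * u ⟨0, hm⟩ > 0)
    (u : EuclideanSpace ℝ (Fin n) → EuclideanSpace ℝ (Fin m))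
    (hu : ContDiff ℝ 2 u) (hbdd : ∃ C : ℝ, ∀ x, ‖u x‖ ≤ C)
    (hsol : ∀ x, vectorLaplacian u x = F (u x)) :
    ∀ x, u x ⟨0, hm⟩ ≤ L := by
  by_contra hcon
  push_neg at hcon
  obtain ⟨xstar, hxstar⟩ := hcon
  obtain ⟨C, hC⟩ := hbdd
  set j : Fin m := ⟨0, hm⟩
  set v : EuclideanSpace ℝ (Fin n) → ℝ := fun x => EuclideanSpace.proj (𝕜 := ℝ) j (u x) with hvdef
  have hv : ContDiff ℝ 2 v := (EuclideanSpace.proj (𝕜 := ℝ) j).contDiff.comp hu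
  have hvabs : ∀ x, |v x| ≤ C := by
    intro x
    have h1 : |v x| ≤ ‖u x‖ := by
      have := abs_real_inner_le_norm (EuclideanSpace.single j (1:ℝ)) (u x)
      have h' : |(u x) j| ≤ ‖u x‖ := by
        simpa [EuclideanSpace.inner_single_left, EuclideanSpace.norm_single] using this
      exact h'
    exact h1.trans (hC x)
  have hbdda : BddAbove (Set.range v) := by
    refine ⟨C, ?_⟩
    rintro _ ⟨x, rfl⟩
    exact (le_abs_self _).trans (hvabs x)
  set M : ℝ := ⨆ x, v x with hMdef
  have hMx : ∀ x, v x ≤ M := fun x => le_ciSup hbdda x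
  have hLM : L < M := lt_of_lt_of_le hxstar (hMx xstar)
  set a : ℝ := (M + L) / 2 with hadef
  have hLa : L < a := by simp only [hadef]; linarith
  have haM : a < M := by simp only [hadef]; linarith
  -- choose y with v y close to M
  have hbM : (M + a) / 2 < M := by linarith
  obtain ⟨y, hy⟩ : ∃ y, (M + a) / 2 < v y := exists_lt_of_lt_ciSup hbM
  -- compact set and minimum of F component
  set K : Set (EuclideanSpace ℝ (Fin m)) :=
    Metric.closedBall 0 C ∩ {w | a ≤ w j} with hKdef
  have hKc : IsCompact K :=
    (isCompact_closedBall _ _).inter_right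
      (isClosed_le continuous_const (EuclideanSpace.proj (𝕜 := ℝ) j).continuous)
  have hKmem : ∀ x : EuclideanSpace ℝ (Fin n), a ≤ v x → u x ∈ K := by
    intro x hx
    refine ⟨?_, hx⟩
    rw [Metric.mem_closedBall, dist_zero_right]
    exact hC x
  have hKne : K.Nonempty := ⟨u y, hKmem y (by linarith)⟩
  obtain ⟨w₀, hw₀K, hw₀min⟩ := hKc.exists_isMinOn hKne
    (((EuclideanSpace.proj (𝕜 := ℝ) j).continuous.comp hF.continuous).continuousOn)
  set δ : ℝ := F w₀ j with hδdef
  have hw₀pos : (0:ℝ) < w₀ j := lt_of_le_of_lt hL (lt_of_lt_of_le hLa hw₀K.2)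
  have hδpos : 0 < δ := by
    have h := hsign w₀ (lt_of_lt_of_le hLa hw₀K.2)
    nlinarith [h, hw₀pos]
  -- choose epsilon
  set ε : ℝ := min (δ / (2 * n + 1)) ((M - a) / (2 * (‖y‖^2 + 1))) with hεdef
  have hεpos : 0 < ε := by
    apply lt_min
    · positivity
    · apply div_pos (by linarith) (by positivity)
  set g : EuclideanSpace ℝ (Fin n) → ℝ := fun x => v x - ε * ‖x‖^2 with hgdef
  have hgcont : Continuous g :=
    (hv.continuous).sub (continuous_const.mul ((continuous_norm).pow 2))
  -- existence of global max of g
  set R : ℝ := Real.sqrt ((2 * C + 1) / ε) with hRdef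
  have hC0 : 0 ≤ C := (abs_nonneg _).trans (hvabs y)
  have hR0 : 0 ≤ R := Real.sqrt_nonneg _
  obtain ⟨x₀, hx₀mem, hx₀max⟩ := (isCompact_closedBall (0 : EuclideanSpace ℝ (Fin n)) R)
    |>.exists_isMaxOn ⟨0, Metric.mem_closedBall_self hR0⟩ hgcont.continuousOn
  have hout : ∀ x : EuclideanSpace ℝ (Fin n), R < ‖x‖ → g x < g 0 := by
    intro x hx
    have hR2 : R^2 = (2 * C + 1) / ε := Real.sq_sqrt (by positivity)
    have h1 : (2 * C + 1) / ε < ‖x‖^2 := by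
      rw [← hR2]
      exact pow_lt_pow_left₀ hx hR0 (by norm_num)
    have h2 : 2 * C + 1 < ε * ‖x‖^2 := by
      rw [div_lt_iff₀ hεpos] at h1
      linarith [h1]
    have h3 : g x < -C - 1 := by
      have := (neg_abs_le (v x)).trans' (neg_le_neg (hvabs x))
      simp only [hgdef]
      have hvx : v x ≤ C := (le_abs_self _).trans (hvabs x)
      linarith
    have h4 : -C ≤ g 0 := by
      simp only [hgdef, norm_zero]
      have := (neg_abs_le (v 0)).trans (le_abs_self (v 0) |>.trans (le_refl _))
      have hv0 : -C ≤ v 0 := by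
        have := hvabs 0
        linarith [neg_abs_le (v 0), abs_nonneg (v 0)]
      simp
      linarith
    linarith
  have hgmax : ∀ x, g x ≤ g x₀ := by
    intro x
    by_cases hx : ‖x‖ ≤ R
    · exact hx₀max (by rwa [Metric.mem_closedBall, dist_zero_right])
    · push_neg at hx
      exact le_trans (hout x hx).le (hx₀max (Metric.mem_closedBall_self hR0))
  -- v x₀ > a
  have hεy : ε * ‖y‖^2 < (M - a) / 2 := by
    have h1 : ε ≤ (M - a) / (2 * (‖y‖^2 + 1)) := min_le_right _ _
    have h2 : (0:ℝ) < ‖y‖^2 + 1 := by positivity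
    have h3 : ε * ‖y‖^2 ≤ (M - a) / (2 * (‖y‖^2 + 1)) * ‖y‖^2 :=
      mul_le_mul_of_nonneg_right h1 (by positivity)
    have h4 : (M - a) / (2 * (‖y‖^2 + 1)) * ‖y‖^2 < (M - a) / 2 := by
      rw [div_mul_eq_mul_div, div_lt_div_iff₀ (by positivity) (by norm_num)]
      nlinarith [sq_nonneg ‖y‖]
    linarith
  have hvx₀ : a < v x₀ := by
    have h1 : g y ≤ g x₀ := hgmax y
    have h2 : g x₀ ≤ v x₀ := by
      simp only [hgdef]
      nlinarith [sq_nonneg ‖x₀‖, hεpos.le]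
    have h3 : v y - ε * ‖y‖^2 ≤ v x₀ := by
      simp only [hgdef] at h1
      nlinarith [sq_nonneg ‖x₀‖, hεpos.le, h1, h2]
    linarith
  -- the Laplacian of v at x₀ equals F (u x₀) j ≥ δ
  have hFlow : δ ≤ F (u x₀) j := hw₀min (hKmem x₀ hvx₀.le)
  -- second derivative bound in each direction
  have hDbound : ∀ i : Fin n,
      fderiv ℝ (fun z => fderiv ℝ v z (EuclideanSpace.single i 1)) x₀
        (EuclideanSpace.single i 1) ≤ 2 * ε := by
    intro i
    set w : EuclideanSpace ℝ (Fin n) := EuclideanSpace.single i 1 with hwdef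
    set c : ℝ := inner (𝕜 := ℝ) x₀ w with hcdef
    have hnorm : ∀ t : ℝ, ‖x₀ + t • w‖^2 = ‖x₀‖^2 + 2 * c * t + t^2 := by
      intro t
      rw [norm_add_sq_real, real_inner_smul_right, norm_smul]
      have hw1 : ‖w‖ = 1 := by
        simp [hwdef, EuclideanSpace.norm_single]
      rw [hw1]
      simp only [Real.norm_eq_abs, mul_one, sq_abs]
      rw [← hcdef]
      ring
    set χ : ℝ → ℝ := fun t => v (x₀ + t • w) - ε * (2 * c * t + t^2) with hχdef
    have hχmax : ∀ t, χ t ≤ χ 0 := by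
      intro t
      have h1 : g (x₀ + t • w) ≤ g x₀ := hgmax _
      simp only [hgdef] at h1
      rw [hnorm t] at h1
      simp only [hχdef]
      simp only [zero_smul, add_zero, mul_zero, ne_eq, OfNat.ofNat_ne_zero,
        not_false_eq_true, zero_pow, mul_zero, add_zero, sub_zero]
      nlinarith [h1]
    have hχ' : ∀ t, HasDerivAt χ
        (fderiv ℝ v (x₀ + t • w) w - ε * (2 * c + 2 * t)) t := by
      intro t
      have h1 := line_first_deriv v hv x₀ w t
      have h2 : HasDerivAt (fun t : ℝ => ε * (2 * c * t + t^2)) (ε * (2 * c + 2 * t)) t := by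
        have h3 := (((hasDerivAt_id t).const_mul (2*c)).add (hasDerivAt_pow 2 t)).const_mul ε
        have he : ε * (2*c*1 + (2:ℕ) * t ^ (2-1)) = ε * (2 * c + 2 * t) := by push_cast; ring
        rw [he] at h3
        simpa using h3
      exact h1.sub h2
    have hχ'' : HasDerivAt (fun t => fderiv ℝ v (x₀ + t • w) w - ε * (2 * c + 2 * t))
        (fderiv ℝ (fun z => fderiv ℝ v z w) x₀ w - ε * 2) 0 := by
      have h1 := line_second_deriv v hv x₀ w
      have h2 : HasDerivAt (fun t : ℝ => ε * (2 * c + 2 * t)) (ε * 2) 0 := by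
        have h3 := (((hasDerivAt_id (0:ℝ)).const_mul 2).const_add (2*c)).const_mul ε
        simpa using h3
      exact h1.sub h2
    have := second_deriv_nonpos_of_max χ _ _ hχ' hχ'' hχmax
    linarith
  -- sum up
  have hlap : ∑ i : Fin n, fderiv ℝ (fun z => fderiv ℝ v z (EuclideanSpace.single i 1)) x₀
      (EuclideanSpace.single i 1) = F (u x₀) j := by
    rw [laplacian_comp_proj j u hu x₀, hsol x₀]
  have hsum : ∑ i : Fin n, fderiv ℝ (fun z => fderiv ℝ v z (EuclideanSpace.single i 1)) x₀
      (EuclideanSpace.single i 1) ≤ (n : ℝ) * (2 * ε) := by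
    calc _ ≤ ∑ _i : Fin n, 2 * ε := Finset.sum_le_sum (fun i _ => hDbound i)
    _ = (n : ℝ) * (2 * ε) := by simp [Finset.sum_const, mul_comm]
  have hεδ : ε ≤ δ / (2 * n + 1) := min_le_left _ _
  have hfinal : (n : ℝ) * (2 * ε) < δ := by
    have h1 : (2 * (n:ℝ) + 1) * ε ≤ δ := by
      rw [le_div_iff₀ (by positivity)] at hεδ
      linarith [hεδ]
    nlinarith [hεpos]
  rw [hlap] at hsum
  linarith
end

section
/- Every bounded entire C² solution u : ℝⁿ → ℝ^m of the Ginzburg–Landau system Δu = (|u|² − 1)u satisfies |u(x)| ≤ 1 for all x ∈ ℝⁿ; moreover if u is not constant then |u(x)| < 1 for all x ∈ ℝⁿ. -/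
open Filter Metric Set RealInnerProductSpace

section OneVar
variable {E : Type*} [NormedAddCommGroup E] [NormedSpace ℝ E]
lemma secondDerivTest {f : ℝ → ℝ} (hf : ContDiff ℝ 2 f) {a : ℝ} (h : IsLocalMax f a) :
    deriv (deriv f) a ≤ 0 := by
  by_contra hd
  push_neg at hd
  have hg : ContDiff ℝ 1 (deriv f) := by
    rw [show (2:WithTop ℕ∞) = 1 + 1 from rfl, contDiff_succ_iff_deriv] at hf
    exact hf.2.2
  have hgd : DifferentiableAt ℝ (deriv f) a := hg.differentiable one_ne_zero a
  have hga : deriv f a = 0 := h.deriv_eq_zero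
  have hslope : Tendsto (slope (deriv f) a) (nhdsWithin a {a}ᶜ) (nhds (deriv (deriv f) a)) :=
    hasDerivAt_iff_tendsto_slope.1 hgd.hasDerivAt
  have hev : ∀ᶠ x in nhdsWithin a {a}ᶜ, 0 < slope (deriv f) a x :=
    hslope.eventually (eventually_gt_nhds hd)
  rw [eventually_nhdsWithin_iff, Metric.eventually_nhds_iff] at hev
  obtain ⟨ε₂, hε₂, hev⟩ := hev
  obtain ⟨ε₁, hε₁, hmax⟩ := Metric.eventually_nhds_iff.1 h
  set δ := min ε₁ ε₂ / 2 with hδ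
  have hδpos : 0 < δ := by positivity
  have hm1 := min_le_left ε₁ ε₂
  have hm2 := min_le_right ε₁ ε₂
  have hpos : ∀ x ∈ Ioo a (a + δ), 0 < deriv f x := by
    intro x hx
    have hxa : x ≠ a := ne_of_gt hx.1
    have hdist : dist x a < ε₂ := by
      rw [Real.dist_eq, abs_of_pos (by linarith [hx.1])]
      have := hx.2; simp only [hδ] at this; linarith
    have := hev hdist hxa
    rw [slope_def_field, div_pos_iff] at this
    rcases this with ⟨h1, h2⟩ | ⟨h1, h2⟩
    · rw [hga] at h1; linarith
    · linarith [hx.1]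
  have hmono : StrictMonoOn f (Icc a (a + δ)) := by
    apply strictMonoOn_of_deriv_pos (convex_Icc _ _) (hf.continuous.continuousOn)
    intro x hx
    rw [interior_Icc] at hx
    exact hpos x hx
  have h1 : f a < f (a + δ) :=
    hmono (left_mem_Icc.2 (by linarith)) (right_mem_Icc.2 (by linarith)) (by linarith)
  have h2 : f (a + δ) ≤ f a := by
    apply hmax
    rw [Real.dist_eq, abs_of_pos (by linarith)]
    simp only [hδ]; linarith
  linarith


lemma line_contDiff (x v : E) : ContDiff ℝ 2 (fun t : ℝ => x + t • v) :=
  contDiff_const.add (contDiff_id.smul contDiff_const)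

lemma line_hasDerivAt_s3 (x v : E) (t : ℝ) :
    HasDerivAt (fun s : ℝ => x + s • v) v t := by
  simpa using ((hasDerivAt_id t).smul_const v).const_add x

lemma deriv_along_line {f : E → ℝ} (hf : ContDiff ℝ 2 f) (x v : E) (t : ℝ) :
    HasDerivAt (fun s : ℝ => f (x + s • v)) (fderiv ℝ f (x + t • v) v) t :=
  ((hf.differentiable (by norm_num) _).hasFDerivAt).comp_hasDerivAt t (line_hasDerivAt_s3 x v t)

lemma contDiff_fderiv_apply_s3 {f : E → ℝ} (hf : ContDiff ℝ 2 f) (v : E) :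
    ContDiff ℝ 1 (fun y => fderiv ℝ f y v) :=
  (hf.fderiv_right (le_refl _)).clm_apply contDiff_const

lemma second_deriv_along_line {f : E → ℝ} (hf : ContDiff ℝ 2 f) (x v : E) :
    deriv (deriv (fun s : ℝ => f (x + s • v))) 0
      = fderiv ℝ (fun y => fderiv ℝ f y v) x v := by
  have h1 : deriv (fun s : ℝ => f (x + s • v)) = fun s => fderiv ℝ f (x + s • v) v := by
    funext t; exact (deriv_along_line hf x v t).deriv
  rw [h1]
  have h2 : HasDerivAt (fun s : ℝ => fderiv ℝ f (x + s • v) v)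
      (fderiv ℝ (fun y => fderiv ℝ f y v) (x + (0:ℝ) • v) v) 0 :=
    (((contDiff_fderiv_apply_s3 hf v).differentiable one_ne_zero _).hasFDerivAt).comp_hasDerivAt 0
      (line_hasDerivAt_s3 x v 0)
  simpa using h2.deriv

lemma directional_secondDerivTest {f : E → ℝ} (hf : ContDiff ℝ 2 f) {x : E}
    (h : IsLocalMax f x) (v : E) :
    fderiv ℝ (fun y => fderiv ℝ f y v) x v ≤ 0 := by
  have hg : ContDiff ℝ 2 (fun s : ℝ => f (x + s • v)) := hf.comp (line_contDiff x v)
  have hmax : IsLocalMax (fun s : ℝ => f (x + s • v)) 0 := by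
    have hc : ContinuousAt (fun s : ℝ => x + s • v) 0 := ((line_contDiff x v).continuous).continuousAt
    have h0 : (fun s : ℝ => x + s • v) 0 = x := by simp
    have ht : Filter.Tendsto (fun s : ℝ => x + s • v) (nhds 0) (nhds x) := by
      have h3 := hc.tendsto
      simpa using h3
    have h2 := ht.eventually h
    unfold IsLocalMax IsMaxFilter
    simpa [h0] using h2
  rw [← second_deriv_along_line hf x v]
  exact secondDerivTest hg hmax

end OneVar

variable {E F : Type*} [NormedAddCommGroup E] [InnerProductSpace ℝ E]
  [NormedAddCommGroup F] [InnerProductSpace ℝ F]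

lemma contDiff_fderiv_apply'_s3 {φ : E → F} (hφ : ContDiff ℝ 2 φ) (v : E) :
    ContDiff ℝ 1 (fun y => fderiv ℝ φ y v) :=
  (hφ.fderiv_right (le_refl _)).clm_apply contDiff_const

lemma contDiff_normsq {φ : E → F} (hφ : ContDiff ℝ 2 φ) :
    ContDiff ℝ 2 (fun z => ⟪φ z, φ z⟫) := hφ.inner ℝ hφ

lemma fderiv_normsq_apply {φ : E → F} (hφ : ContDiff ℝ 2 φ) (y : E) (v : E) :
    fderiv ℝ (fun z => ⟪φ z, φ z⟫) y v = 2 * ⟪φ y, fderiv ℝ φ y v⟫ := by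
  have hd := (hφ.differentiable (by norm_num) y).hasFDerivAt
  have h := (HasFDerivAt.inner ℝ hd hd).fderiv
  rw [h]
  simp [real_inner_comm]
  ring

lemma fderiv_fderiv_normsq_apply {φ : E → F} (hφ : ContDiff ℝ 2 φ) (x : E) (v : E) :
    fderiv ℝ (fun y => fderiv ℝ (fun z => ⟪φ z, φ z⟫) y v) x v
      = 2 * ‖fderiv ℝ φ x v‖ ^ 2
        + 2 * ⟪φ x, fderiv ℝ (fun y => fderiv ℝ φ y v) x v⟫ := by
  have hfun : (fun y => fderiv ℝ (fun z => ⟪φ z, φ z⟫) y v)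
      = fun y => 2 * ⟪φ y, fderiv ℝ φ y v⟫ := by
    funext y; exact fderiv_normsq_apply hφ y v
  rw [hfun]
  have hDd : DifferentiableAt ℝ (fun y => fderiv ℝ φ y v) x :=
    (contDiff_fderiv_apply'_s3 hφ v).differentiable one_ne_zero x
  have hud : DifferentiableAt ℝ φ x := hφ.differentiable (by norm_num) x
  have hinner := (HasFDerivAt.inner ℝ hud.hasFDerivAt hDd.hasFDerivAt)
  have h2 := (hinner.const_mul (2:ℝ)).fderiv
  rw [show (fun y => 2 * ⟪φ y, fderiv ℝ φ y v⟫) = fun y => 2 * inner ℝ (φ y) (fderiv ℝ φ y v) from rfl]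
  rw [h2]
  simp [real_inner_comm, real_inner_self_eq_norm_sq]
  ring
variable {E : Type*} [NormedAddCommGroup E] [InnerProductSpace ℝ E]

example (f : E → ℝ) (x : E) (h : DifferentiableAt ℝ f x) :
    fderiv ℝ (fun y => Real.exp (f y)) x = Real.exp (f x) • fderiv ℝ f x := by
  exact fderiv_exp h

lemma sub_const_contDiff (p : E) : ContDiff ℝ 2 (fun z : E => z - p) :=
  contDiff_id.sub contDiff_const

lemma fderiv_sub_const_apply (p : E) (y v : E) : fderiv ℝ (fun z : E => z - p) y v = v := by
  have h : HasFDerivAt (fun z : E => z - p) (ContinuousLinearMap.id ℝ E) y :=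
    (hasFDerivAt_id y).sub_const p
  rw [h.fderiv]; rfl

lemma qform_contDiff (p : E) : ContDiff ℝ 2 (fun z : E => ⟪z - p, z - p⟫) :=
  (sub_const_contDiff p).inner ℝ (sub_const_contDiff p)

lemma qform_fderiv (p : E) (y v : E) :
    fderiv ℝ (fun z : E => ⟪z - p, z - p⟫) y v = 2 * ⟪y - p, v⟫ := by
  have h := fderiv_normsq_apply (sub_const_contDiff p) y v
  rwa [fderiv_sub_const_apply] at h

lemma qform_fderiv2 (p : E) (x v : E) :
    fderiv ℝ (fun y => fderiv ℝ (fun z : E => ⟪z - p, z - p⟫) y v) x v = 2 * ‖v‖ ^ 2 := by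
  have h := fderiv_fderiv_normsq_apply (sub_const_contDiff p) x v
  rw [fderiv_sub_const_apply] at h
  have hz : (fun y => fderiv ℝ (fun z : E => z - p) y v) = fun _ => v := by
    funext y; exact fderiv_sub_const_apply p y v
  rw [hz, fderiv_fun_const] at h
  simpa using h

section Barrier
variable (p : E) (α : ℝ)

lemma gform_contDiff : ContDiff ℝ 2 (fun z : E => -α * ⟪z - p, z - p⟫) :=
  contDiff_const.mul (qform_contDiff p)

lemma gform_fderiv (y v : E) :
    fderiv ℝ (fun z : E => -α * ⟪z - p, z - p⟫) y v = -α * (2 * ⟪y - p, v⟫) := by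
  have hd : DifferentiableAt ℝ (fun z : E => ⟪z - p, z - p⟫) y :=
    (qform_contDiff p).differentiable (by norm_num) y
  rw [fderiv_const_mul hd]
  rw [ContinuousLinearMap.smul_apply, qform_fderiv p y v, smul_eq_mul]

lemma barrier_contDiff : ContDiff ℝ 2 (fun z : E => Real.exp (-α * ⟪z - p, z - p⟫)) :=
  (Real.contDiff_exp.of_le le_top).comp (gform_contDiff p α)

lemma barrier_fderiv (y v : E) :
    fderiv ℝ (fun z : E => Real.exp (-α * ⟪z - p, z - p⟫)) y v
      = (-α * (2 * ⟪y - p, v⟫)) * Real.exp (-α * ⟪y - p, y - p⟫) := by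
  have hd : DifferentiableAt ℝ (fun z : E => -α * ⟪z - p, z - p⟫) y :=
    (gform_contDiff p α).differentiable (by norm_num) y
  rw [fderiv_exp hd, ContinuousLinearMap.smul_apply, gform_fderiv p α y v, smul_eq_mul]
  ring

lemma barrier_fderiv2 (x v : E) :
    fderiv ℝ (fun y => fderiv ℝ (fun z : E => Real.exp (-α * ⟪z - p, z - p⟫)) y v) x v
      = (4 * α ^ 2 * ⟪x - p, v⟫ ^ 2 - 2 * α * ‖v‖ ^ 2) * Real.exp (-α * ⟪x - p, x - p⟫) := by
  have hfun : (fun y => fderiv ℝ (fun z : E => Real.exp (-α * ⟪z - p, z - p⟫)) y v)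
      = fun y => (-α * (2 * ⟪y - p, v⟫)) * Real.exp (-α * ⟪y - p, y - p⟫) := by
    funext y; exact barrier_fderiv p α y v
  rw [hfun]
  -- A y = -α * (2 * ⟪y - p, v⟫)
  have hA : HasFDerivAt (fun y : E => ⟪y - p, v⟫)
      ((fderivInnerCLM ℝ ((x : E) - p, v)).comp
        ((ContinuousLinearMap.id ℝ E).prod 0)) x :=
    HasFDerivAt.inner ℝ ((hasFDerivAt_id x).sub_const p) (hasFDerivAt_const v x)
  have hg : HasFDerivAt (fun z : E => -α * ⟪z - p, z - p⟫)
      (fderiv ℝ (fun z : E => -α * ⟪z - p, z - p⟫) x) x :=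
    ((gform_contDiff p α).differentiable (by norm_num) x).hasFDerivAt
  have hB : HasFDerivAt (fun z : E => Real.exp (-α * ⟪z - p, z - p⟫))
      (Real.exp (-α * ⟪x - p, x - p⟫) • fderiv ℝ (fun z : E => -α * ⟪z - p, z - p⟫) x) x :=
    hg.exp
  have hA' : HasFDerivAt (fun y : E => -α * (2 * ⟪y - p, v⟫))
      ((-α * 2) • ((fderivInnerCLM ℝ ((x : E) - p, v)).comp
        ((ContinuousLinearMap.id ℝ E).prod 0))) x := by
    have := hA.const_mul (-α * 2)
    convert this using 2
    · rfl
    ring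
  have hprod := hA'.mul hB
  rw [show (fun y : E => -α * (2 * ⟪y - p, v⟫) * Real.exp (-α * ⟪y - p, y - p⟫)) = (fun y : E => -α * (2 * ⟪y - p, v⟫)) * (fun z : E => Real.exp (-α * ⟪z - p, z - p⟫)) from rfl, hprod.fderiv]
  simp only [ContinuousLinearMap.add_apply, ContinuousLinearMap.smul_apply,
    ContinuousLinearMap.comp_apply, ContinuousLinearMap.prod_apply,
    ContinuousLinearMap.id_apply, ContinuousLinearMap.zero_apply, fderivInnerCLM_apply,
    smul_eq_mul, gform_fderiv p α x v]
  simp [inner_zero_right, real_inner_self_eq_norm_sq]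
  ring
end Barrier

-- second derivative of difference f - c*q
lemma second_fderiv_sub_mul {f q : E → ℝ} (hf : ContDiff ℝ 2 f) (hq : ContDiff ℝ 2 q)
    (c : ℝ) (x v : E) :
    fderiv ℝ (fun y => fderiv ℝ (fun z => f z - c * q z) y v) x v
      = fderiv ℝ (fun y => fderiv ℝ f y v) x v
        - c * fderiv ℝ (fun y => fderiv ℝ q y v) x v := by
  have hfun : (fun y => fderiv ℝ (fun z => f z - c * q z) y v)
      = fun y => fderiv ℝ f y v - c * fderiv ℝ q y v := by
    funext y
    have h1 : DifferentiableAt ℝ f y := hf.differentiable (by norm_num) y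
    have h2 : DifferentiableAt ℝ q y := hq.differentiable (by norm_num) y
    rw [fderiv_fun_sub h1 (h2.const_mul c), fderiv_const_mul h2]
    simp
  rw [hfun]
  have h3 : DifferentiableAt ℝ (fun y => fderiv ℝ f y v) x :=
    (contDiff_fderiv_apply'_s3 hf v).differentiable one_ne_zero x
  have h4 : DifferentiableAt ℝ (fun y => fderiv ℝ q y v) x :=
    (contDiff_fderiv_apply'_s3 hq v).differentiable one_ne_zero x
  rw [fderiv_fun_sub h3 (h4.const_mul c), fderiv_const_mul h4]
  simp

-- second derivative of sum f + c*q
lemma second_fderiv_add_mul {f q : E → ℝ} (hf : ContDiff ℝ 2 f) (hq : ContDiff ℝ 2 q)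
    (c : ℝ) (x v : E) :
    fderiv ℝ (fun y => fderiv ℝ (fun z => f z + c * q z) y v) x v
      = fderiv ℝ (fun y => fderiv ℝ f y v) x v
        + c * fderiv ℝ (fun y => fderiv ℝ q y v) x v := by
  have hfun : (fun y => fderiv ℝ (fun z => f z + c * q z) y v)
      = fun y => fderiv ℝ f y v + c * fderiv ℝ q y v := by
    funext y
    have h1 : DifferentiableAt ℝ f y := hf.differentiable (by norm_num) y
    have h2 : DifferentiableAt ℝ q y := hq.differentiable (by norm_num) y
    rw [fderiv_fun_add h1 (h2.const_mul c), fderiv_const_mul h2]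
    simp
  rw [hfun]
  have h3 : DifferentiableAt ℝ (fun y => fderiv ℝ f y v) x :=
    (contDiff_fderiv_apply'_s3 hf v).differentiable one_ne_zero x
  have h4 : DifferentiableAt ℝ (fun y => fderiv ℝ q y v) x :=
    (contDiff_fderiv_apply'_s3 hq v).differentiable one_ne_zero x
  rw [fderiv_fun_add h3 (h4.const_mul c), fderiv_const_mul h4]
  simp

section GLpart
variable {n m : ℕ}
local notation "Eu" => EuclideanSpace ℝ (Fin n)
local notation "Fu" => EuclideanSpace ℝ (Fin m)

lemma GL_lap_identity (u : Eu → Fu) (hu : ContDiff ℝ 2 u) (x : Eu) :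
    (∑ i : Fin n, fderiv ℝ (fun y => fderiv ℝ (fun z => ⟪u z, u z⟫) y
        (EuclideanSpace.single i 1)) x (EuclideanSpace.single i 1))
      = 2 * (∑ i : Fin n, ‖fderiv ℝ u x (EuclideanSpace.single i 1)‖ ^ 2)
        + 2 * ⟪u x, vectorLaplacian u x⟫ := by
  rw [vectorLaplacian, inner_sum, Finset.mul_sum, Finset.mul_sum, ← Finset.sum_add_distrib]
  apply Finset.sum_congr rfl
  intro i _
  rw [fderiv_fderiv_normsq_apply hu x (EuclideanSpace.single i 1)]

lemma GL_lap_lower (u : Eu → Fu) (hu : ContDiff ℝ 2 u)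
    (hsol : ∀ x, vectorLaplacian u x = (‖u x‖ ^ 2 - 1) • u x) (x : Eu) :
    (∑ i : Fin n, fderiv ℝ (fun y => fderiv ℝ (fun z => ⟪u z, u z⟫) y
        (EuclideanSpace.single i 1)) x (EuclideanSpace.single i 1))
      ≥ 2 * ((‖u x‖ ^ 2 - 1) * ‖u x‖ ^ 2) := by
  rw [GL_lap_identity u hu x, hsol x, real_inner_smul_right, real_inner_self_eq_norm_sq]
  have : 0 ≤ ∑ i : Fin n, ‖fderiv ℝ u x (EuclideanSpace.single i 1)‖ ^ 2 :=
    Finset.sum_nonneg fun i _ => sq_nonneg _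
  nlinarith
end GLpart

section GLpart1
variable {n m : ℕ}
local notation "Eu" => EuclideanSpace ℝ (Fin n)
local notation "Fu" => EuclideanSpace ℝ (Fin m)

lemma GL_W_le_one (u : Eu → Fu) (hu : ContDiff ℝ 2 u) (hbdd : ∃ C : ℝ, ∀ x, ‖u x‖ ≤ C)
    (hsol : ∀ x, vectorLaplacian u x = (‖u x‖ ^ 2 - 1) • u x) :
    ∀ x : Eu, ⟪u x, u x⟫ ≤ 1 := by
  set W : Eu → ℝ := fun z => ⟪u z, u z⟫ with hWdef
  have hW2 : ContDiff ℝ 2 W := contDiff_normsq hu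
  have hWval : ∀ z, W z = ‖u z‖ ^ 2 := fun z => real_inner_self_eq_norm_sq (u z)
  by_contra hcon
  push_neg at hcon
  obtain ⟨x₀, hx₀⟩ := hcon
  obtain ⟨C, hC⟩ := hbdd
  have hWbd : ∀ z, W z ≤ C ^ 2 := by
    intro z
    rw [hWval]
    have h0 : (0:ℝ) ≤ ‖u z‖ := norm_nonneg _
    nlinarith [hC z]
  have hne : (Set.range W).Nonempty := ⟨W 0, ⟨0, rfl⟩⟩
  have hba : BddAbove (Set.range W) := ⟨C ^ 2, by rintro _ ⟨z, rfl⟩; exact hWbd z⟩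
  set S := sSup (Set.range W) with hSdef
  have hS1 : 1 < S := lt_of_lt_of_le hx₀ (le_csSup hba ⟨x₀, rfl⟩)
  set s := S - 1 with hsdef
  have hs : 0 < s := by simp [hsdef]; linarith
  obtain ⟨_, ⟨y, rfl⟩, hy⟩ := exists_lt_of_lt_csSup hne (show S - s/4 < S by linarith)
  set ε := min (s / (8 * (‖y‖ ^ 2 + 1))) (s / (8 * ((n : ℝ) + 1))) with hεdef
  have hεpos : 0 < ε := by
    apply lt_min <;> positivity
  set q : Eu → ℝ := fun z => ⟪z - 0, z - 0⟫ with hqdef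
  have hqval : ∀ z : Eu, q z = ‖z‖ ^ 2 := by
    intro z
    simp only [hqdef, sub_zero]
    exact real_inner_self_eq_norm_sq z
  set g : Eu → ℝ := fun z => W z - ε * q z with hgdef
  have hg2 : ContDiff ℝ 2 g := hW2.sub (contDiff_const.mul (qform_contDiff 0))
  have hgle : ∀ z, g z ≤ W z := by
    intro z
    have : 0 ≤ ε * q z := by
      apply mul_nonneg hεpos.le; rw [hqval]; positivity
    simp [hgdef]; linarith
  set A := {z : Eu | g 0 ≤ g z} with hAdef
  have hA0 : (0:Eu) ∈ A := by simp [hAdef]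
  have hAclosed : IsClosed A := isClosed_le continuous_const hg2.continuous
  have hAbd : Bornology.IsBounded A := by
    apply Bornology.IsBounded.subset (Metric.isBounded_closedBall
      (x := (0:Eu)) (r := Real.sqrt ((C ^ 2 - g 0) / ε)))
    intro z hz
    rw [Metric.mem_closedBall, dist_zero_right]
    have h1 : ε * ‖z‖ ^ 2 ≤ C ^ 2 - g 0 := by
      have h2 : g 0 ≤ g z := hz
      have h3 : g z = W z - ε * ‖z‖ ^ 2 := by rw [hgdef]; simp [hqval z]
      have := hWbd z
      rw [h3] at h2
      linarith
    have h4 : ‖z‖ ^ 2 ≤ (C ^ 2 - g 0) / ε := by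
      rw [le_div_iff₀ hεpos]; linarith
    calc ‖z‖ = Real.sqrt (‖z‖ ^ 2) := by rw [Real.sqrt_sq (norm_nonneg z)]
    _ ≤ Real.sqrt ((C ^ 2 - g 0) / ε) := Real.sqrt_le_sqrt h4
  have hAcompact : IsCompact A := Metric.isCompact_of_isClosed_isBounded hAclosed hAbd
  obtain ⟨x₁, hx₁A, hx₁max⟩ := hAcompact.exists_isMaxOn ⟨0, hA0⟩ hg2.continuous.continuousOn
  have hglob : ∀ z, g z ≤ g x₁ := by
    intro z
    by_cases hz : z ∈ A
    · exact hx₁max hz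
    · have : g z < g 0 := by simpa [hAdef] using hz
      exact le_trans this.le (hx₁max hA0)
  have hlocal : IsLocalMax g x₁ := Filter.Eventually.of_forall hglob
  -- second derivative test summed
  have hsum : (∑ i : Fin n, fderiv ℝ (fun y => fderiv ℝ W y (EuclideanSpace.single i 1)) x₁
      (EuclideanSpace.single i 1)) ≤ 2 * n * ε := by
    have hterm : ∀ i : Fin n,
        fderiv ℝ (fun y => fderiv ℝ W y (EuclideanSpace.single i 1)) x₁
          (EuclideanSpace.single i 1) - ε * 2 ≤ 0 := by
      intro i
      have htest := directional_secondDerivTest hg2 hlocal (EuclideanSpace.single i 1)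
      have heq := second_fderiv_sub_mul hW2 (qform_contDiff (0:Eu)) ε x₁
        (EuclideanSpace.single i 1)
      have hq2 := qform_fderiv2 (0:Eu) x₁ (EuclideanSpace.single i 1)
      have hnorm1 : ‖(EuclideanSpace.single i 1 : Eu)‖ = 1 := by
        rw [EuclideanSpace.norm_single]; norm_num
      rw [hnorm1] at hq2
      rw [show g = fun z => W z - ε * q z from rfl] at htest
      rw [heq, hq2] at htest
      linarith
    calc (∑ i : Fin n, fderiv ℝ (fun y => fderiv ℝ W y (EuclideanSpace.single i 1)) x₁
        (EuclideanSpace.single i 1))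
        ≤ ∑ i : Fin n, ε * 2 := Finset.sum_le_sum (fun i _ => by linarith [hterm i])
      _ = 2 * n * ε := by simp [Finset.sum_const]; ring
  have hlow := GL_lap_lower u hu hsol x₁
  -- W x₁ is large
  have hεy : ε * ‖y‖ ^ 2 ≤ s / 8 := by
    have h1 : ε ≤ s / (8 * (‖y‖ ^ 2 + 1)) := min_le_left _ _
    have h2 : 0 ≤ ‖y‖ ^ 2 := sq_nonneg _
    have h3 : ε * ‖y‖ ^ 2 ≤ s / (8 * (‖y‖ ^ 2 + 1)) * ‖y‖ ^ 2 := by nlinarith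
    have h4 : s / (8 * (‖y‖ ^ 2 + 1)) * ‖y‖ ^ 2 ≤ s / 8 := by
      rw [div_mul_eq_mul_div, div_le_div_iff₀ (by positivity) (by norm_num)]
      nlinarith
    linarith
  have hWx₁ : 1 + 5 * s / 8 ≤ W x₁ := by
    have h1 : g y ≤ g x₁ := hglob y
    have h2 : g y = W y - ε * ‖y‖ ^ 2 := by rw [hgdef]; simp [hqval y]
    have h3 : g x₁ ≤ W x₁ := hgle x₁
    have : S - s/4 < W y := hy
    have hS : S = 1 + s := by rw [hsdef]; ring
    linarith
  have hu1 : 1 ≤ ‖u x₁‖ ^ 2 := by rw [← hWval]; linarith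
  have hlow2 : 2 * (5 * s / 8) ≤ 2 * ((‖u x₁‖ ^ 2 - 1) * ‖u x₁‖ ^ 2) := by
    have h5 : 5 * s / 8 ≤ ‖u x₁‖ ^ 2 - 1 := by rw [← hWval]; linarith
    nlinarith
  have hεn : 2 * n * ε ≤ s / 4 := by
    have h1 : ε ≤ s / (8 * ((n:ℝ) + 1)) := min_le_right _ _
    have h2 : (0:ℝ) ≤ n := Nat.cast_nonneg n
    have h3 : 2 * (n:ℝ) * ε ≤ 2 * n * (s / (8 * ((n:ℝ) + 1))) :=
      mul_le_mul_of_nonneg_left h1 (by positivity)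
    have h4 : 2 * (n:ℝ) * (s / (8 * ((n:ℝ) + 1))) ≤ s / 4 := by
      rw [mul_div_assoc', div_le_div_iff₀ (by positivity) (by norm_num)]
      nlinarith
    linarith
  linarith
end GLpart1
lemma deriv_le_right {φ ψ : ℝ → ℝ} {a b : ℝ} (hφ : HasDerivAt φ a 0) (hψ : HasDerivAt ψ b 0)
    (h0 : φ 0 = ψ 0) (hle : ∀ᶠ t in nhdsWithin 0 (Set.Ioi 0), φ t ≤ ψ t) : a ≤ b := by
  have h1 : Filter.Tendsto (slope φ 0) (nhdsWithin 0 (Set.Ioi 0)) (nhds a) :=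
    (hasDerivAt_iff_tendsto_slope.1 hφ).mono_left
      (nhdsWithin_mono 0 (fun t ht => ne_of_gt ht))
  have h2 : Filter.Tendsto (slope ψ 0) (nhdsWithin 0 (Set.Ioi 0)) (nhds b) :=
    (hasDerivAt_iff_tendsto_slope.1 hψ).mono_left
      (nhdsWithin_mono 0 (fun t ht => ne_of_gt ht))
  apply le_of_tendsto_of_tendsto h1 h2
  filter_upwards [hle, self_mem_nhdsWithin] with t ht hmem
  simp only [slope_def_field, h0]
  have ht0 : (0:ℝ) < t - 0 := by simpa using hmem
  exact (div_le_div_iff_of_pos_right ht0).mpr (by linarith)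

lemma second_fderiv_sub_const {E : Type*} [NormedAddCommGroup E] [NormedSpace ℝ E]
    (f : E → ℝ) (c : ℝ) (x v : E) :
    fderiv ℝ (fun y => fderiv ℝ (fun z => f z - c) y v) x v
      = fderiv ℝ (fun y => fderiv ℝ f y v) x v := by
  have h : (fun y => fderiv ℝ (fun z => f z - c) y v) = fun y => fderiv ℝ f y v := by
    funext y; rw [fderiv_sub_const]
  rw [h]

section GLpart2
variable {n m : ℕ}
local notation "Eu" => EuclideanSpace ℝ (Fin n)
local notation "Fu" => EuclideanSpace ℝ (Fin m)
open RealInnerProductSpace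

lemma euclid_sum_inner_single_sq (z : Eu) :
    ∑ i : Fin n, ⟪z, EuclideanSpace.single i (1:ℝ)⟫ ^ 2 = ‖z‖ ^ 2 := by
  rw [EuclideanSpace.norm_eq, Real.sq_sqrt (by positivity)]
  apply Finset.sum_congr rfl; intro i _
  rw [EuclideanSpace.inner_single_right]
  simp [Real.norm_eq_abs, sq_abs]

lemma euclid_single_norm (i : Fin n) : ‖(EuclideanSpace.single i (1:ℝ) : Eu)‖ = 1 := by
  rw [EuclideanSpace.norm_single]; norm_num

lemma barrier_lap (p : Eu) (α : ℝ) (x : Eu) :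
    ∑ i : Fin n, fderiv ℝ (fun y => fderiv ℝ
        (fun z => Real.exp (-α * ⟪z - p, z - p⟫)) y (EuclideanSpace.single i 1)) x
        (EuclideanSpace.single i 1)
      = (4 * α ^ 2 * ‖x - p‖ ^ 2 - 2 * n * α) * Real.exp (-α * ⟪x - p, x - p⟫) := by
  have hterm : ∀ i : Fin n, fderiv ℝ (fun y => fderiv ℝ
      (fun z => Real.exp (-α * ⟪z - p, z - p⟫)) y (EuclideanSpace.single i 1)) x
      (EuclideanSpace.single i 1)
      = (4 * α ^ 2 * ⟪x - p, EuclideanSpace.single i (1:ℝ)⟫ ^ 2 - 2 * α * 1)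
          * Real.exp (-α * ⟪x - p, x - p⟫) := by
    intro i
    have h := barrier_fderiv2 p α x (EuclideanSpace.single i 1)
    rwa [euclid_single_norm i, one_pow] at h
  simp only [hterm]
  rw [← Finset.sum_mul]
  congr 1
  rw [Finset.sum_sub_distrib, ← Finset.mul_sum, euclid_sum_inner_single_sq]
  simp [Finset.sum_const]
  ring

lemma fderiv_eq_zero_of_single {φ : Eu → Fu} {z : Eu}
    (hd : DifferentiableAt ℝ φ z)
    (h : ∀ i : Fin n, fderiv ℝ φ z (EuclideanSpace.single i 1) = 0) :
    fderiv ℝ φ z = 0 := by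
  apply ContinuousLinearMap.ext
  intro v
  have hv : ∑ i : Fin n, v i • (EuclideanSpace.single i (1:ℝ) : Eu) = v := by
    have hb := (EuclideanSpace.basisFun (Fin n) ℝ).sum_repr v
    simpa [EuclideanSpace.basisFun_apply, EuclideanSpace.basisFun_repr] using hb
  rw [← hv, map_sum]
  simp only [map_smul, h, smul_zero, Finset.sum_const_zero,
    ContinuousLinearMap.zero_apply]

set_option maxHeartbeats 2000000 in
lemma GL_no_touch (hn : 0 < n) (u : Eu → Fu) (hu : ContDiff ℝ 2 u)
    (hsol : ∀ x, vectorLaplacian u x = (‖u x‖ ^ 2 - 1) • u x)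
    (hle : ∀ x : Eu, ⟪u x, u x⟫ ≤ 1) (x₀ : Eu) (hx₀ : ⟪u x₀, u x₀⟫ = 1) :
    ∃ c, ∀ x, u x = c := by
  haveI : Nontrivial Eu := by
    refine nontrivial_of_ne (EuclideanSpace.single ⟨0, hn⟩ (1:ℝ)) 0 ?_
    intro h
    have h2 := congrArg norm h
    rw [EuclideanSpace.norm_single] at h2
    simp at h2
  set W : Eu → ℝ := fun z => ⟪u z, u z⟫ with hWdef
  have hW2 : ContDiff ℝ 2 W := contDiff_normsq hu
  have hWval : ∀ z, W z = ‖u z‖ ^ 2 := fun z => real_inner_self_eq_norm_sq (u z)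
  set Ω := {z : Eu | W z < 1} with hΩdef
  have hΩopen : IsOpen Ω := isOpen_lt hW2.continuous continuous_const
  by_cases hΩ : Ω.Nonempty
  case neg =>
    have hW1 : ∀ z, W z = 1 := by
      intro z
      rcases lt_or_eq_of_le (hle z) with h | h
      · exact absurd ⟨z, h⟩ hΩ
      · exact h
    have hWconst : W = fun _ => (1:ℝ) := funext hW1
    have hderiv0 : ∀ z, fderiv ℝ u z = 0 := by
      intro z
      apply fderiv_eq_zero_of_single (hu.differentiable (by norm_num) z)
      intro i
      -- use Laplacian identity: 0 = 2 ∑ ‖∂ᵢu‖² + 0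
      have hid := GL_lap_identity u hu z
      have hlap0 : (∑ i : Fin n, fderiv ℝ (fun y => fderiv ℝ (fun z => ⟪u z, u z⟫) y
          (EuclideanSpace.single i 1)) z (EuclideanSpace.single i 1)) = 0 := by
        apply Finset.sum_eq_zero
        intro j _
        have h1 : (fun y => fderiv ℝ (fun z => ⟪u z, u z⟫) y
            (EuclideanSpace.single (𝕜 := ℝ) j 1)) = fun _ => 0 := by
          funext y
          rw [show (fun z => ⟪u z, u z⟫) = W from rfl, hWconst, fderiv_const_apply]
          rfl
        rw [h1, fderiv_const_apply]
        rfl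
      have hinner0 : ⟪u z, vectorLaplacian u z⟫ = 0 := by
        rw [hsol z, real_inner_smul_right, real_inner_self_eq_norm_sq, ← hWval, hW1 z]
        ring
      rw [hlap0, hinner0] at hid
      have hsumsq : (∑ i : Fin n, ‖fderiv ℝ u z (EuclideanSpace.single i 1)‖ ^ 2) = 0 := by
        linarith
      have hterm0 : ‖fderiv ℝ u z (EuclideanSpace.single i 1)‖ ^ 2 = 0 := by
        have hnn : ∀ j ∈ Finset.univ, (0:ℝ) ≤ ‖fderiv ℝ u z (EuclideanSpace.single j 1)‖ ^ 2 :=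
          fun j _ => sq_nonneg _
        have := (Finset.sum_eq_zero_iff_of_nonneg hnn).1 hsumsq i (Finset.mem_univ i)
        exact this
      have := sq_eq_zero_iff.1 hterm0
      exact norm_eq_zero.1 this
    refine ⟨u 0, fun x => ?_⟩
    exact is_const_of_fderiv_eq_zero (hu.differentiable (by norm_num)) hderiv0 x 0
  case pos =>
    exfalso
    obtain ⟨p, hp⟩ := hΩ
    have hx₀mem : x₀ ∈ Ωᶜ := by
      simp only [hΩdef, Set.mem_compl_iff, Set.mem_setOf_eq, not_lt]
      rw [show W x₀ = ⟪u x₀, u x₀⟫ from rfl, hx₀]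
    have hΩcc : IsClosed (Ωᶜ) := hΩopen.isClosed_compl
    set d := Metric.infDist p Ωᶜ with hddef
    have hdpos : 0 < d := by
      rw [hddef]
      exact (hΩcc.notMem_iff_infDist_pos ⟨x₀, hx₀mem⟩).1 (by simpa using hp)
    obtain ⟨y₀, hy₀mem, hy₀d⟩ := hΩcc.exists_infDist_eq_dist ⟨x₀, hx₀mem⟩ p
    set R := d with hRdef
    have hRpos : 0 < R := hdpos
    have hdisty : dist p y₀ = R := hy₀d.symm
    have hball : Metric.ball p R ⊆ Ω := by
      intro z hz
      by_contra hzc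
      have h1 : Metric.infDist p Ωᶜ ≤ dist p z := Metric.infDist_le_dist_of_mem hzc
      rw [Metric.mem_ball, dist_comm] at hz
      rw [← hddef] at h1
      exact absurd (lt_of_le_of_lt h1 hz) (lt_irrefl _)
    have hWy₀ : W y₀ = 1 := by
      have h1 : ¬ W y₀ < 1 := hy₀mem
      exact le_antisymm (hle y₀) (not_lt.1 h1)
    have hmaxy₀ : IsLocalMax W y₀ := by
      apply Filter.Eventually.of_forall
      intro z
      rw [hWy₀]; exact hle z
    have hfd0 : fderiv ℝ W y₀ = 0 := hmaxy₀.fderiv_eq_zero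
    set α := max 1 ((2*(n:ℝ)+2)/R^2) with hαdef
    have hα1 : (1:ℝ) ≤ α := le_max_left _ _
    have hαpos : (0:ℝ) < α := lt_of_lt_of_le one_pos hα1
    have hαR : 2*(n:ℝ)+2 ≤ α * R^2 := by
      have h1 : (2*(n:ℝ)+2)/R^2 ≤ α := le_max_right _ _
      rw [div_le_iff₀ (by positivity)] at h1
      linarith
    set K := Real.exp (-α * R^2) with hKdef
    have hKpos : 0 < K := Real.exp_pos _
    set bar := fun z : Eu => Real.exp (-α * ⟪z - p, z - p⟫) with hbardef
    have hbarval : ∀ z : Eu, bar z = Real.exp (-α * ‖z - p‖^2) := by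
      intro z
      rw [hbardef]
      simp only []
      rw [real_inner_self_eq_norm_sq]
    -- sphere max
    have hsph_sub : Metric.sphere p (R/2) ⊆ Ω := by
      intro z hz
      apply hball
      rw [Metric.mem_ball, Metric.mem_sphere.1 hz]
      linarith
    have hsph_ne : (Metric.sphere p (R/2)).Nonempty :=
      NormedSpace.sphere_nonempty.2 (by positivity)
    obtain ⟨x₂, hx₂mem, hx₂max⟩ := (isCompact_sphere p (R/2)).exists_isMaxOn hsph_ne
      hW2.continuous.continuousOn
    set δ := 1 - W x₂ with hδdef
    have hδpos : 0 < δ := by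
      have h1 : W x₂ < 1 := hsph_sub hx₂mem
      simp [hδdef]; linarith
    set h₀ := Real.exp (-α * (R/2)^2) - K with hh₀def
    have hh₀pos : 0 < h₀ := by
      rw [hh₀def, hKdef, sub_pos]
      apply Real.exp_lt_exp.2
      nlinarith
    set ε := δ / h₀ with hεdef
    have hεpos : 0 < ε := div_pos hδpos hh₀pos
    have hεh₀ : ε * h₀ = δ := by rw [hεdef]; field_simp
    set vf := fun z : Eu => (W z - (1 + ε * K)) + ε * bar z with hvfdef
    have hvf2 : ContDiff ℝ 2 vf :=
      (hW2.sub contDiff_const).add (contDiff_const.mul (barrier_contDiff p α))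
    have hvval : ∀ z, vf z = (W z - 1) + ε * (bar z - K) := by
      intro z; simp only [hvfdef]; ring
    set A := Metric.ball p R \ Metric.closedBall p (R/2) with hAdef
    have hAopen : IsOpen A := Metric.isOpen_ball.sdiff Metric.isClosed_closedBall
    have hclosA : closure A ⊆ Metric.closedBall p R ∩ {z : Eu | R/2 ≤ dist z p} := by
      apply closure_minimal
      · rintro z ⟨hz1, hz2⟩
        refine ⟨Metric.ball_subset_closedBall hz1, ?_⟩
        simp only [Set.mem_setOf_eq]
        by_contra hlt
        exact hz2 (Metric.mem_closedBall.2 (le_of_not_ge hlt))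
      · exact Metric.isClosed_closedBall.inter (isClosed_le continuous_const (continuous_id.dist continuous_const))
    have hAbd : Bornology.IsBounded (closure A) :=
      (Metric.isBounded_ball.subset Set.diff_subset).closure
    have hweak : ∀ z ∈ closure A, vf z ≤ 0 := by
      intro z hz
      by_contra hposv
      push_neg at hposv
      have hccA : IsCompact (closure A) :=
        Metric.isCompact_of_isClosed_isBounded isClosed_closure hAbd
      obtain ⟨x₃, hx₃mem, hx₃max⟩ := hccA.exists_isMaxOn ⟨z, hz⟩ hvf2.continuous.continuousOn
      have hvx₃ : 0 < vf x₃ := lt_of_lt_of_le hposv (hx₃max hz)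
      obtain ⟨hx₃cb, hx₃ge⟩ := hclosA hx₃mem
      have hx₃A : x₃ ∈ A := by
        by_contra hnotA
        have hge : R/2 ≤ dist x₃ p := hx₃ge
        have hle' : dist x₃ p ≤ R := Metric.mem_closedBall.1 hx₃cb
        have hcases : dist x₃ p = R ∨ dist x₃ p = R/2 := by
          rw [hAdef] at hnotA
          simp only [Set.mem_diff, Metric.mem_ball, Metric.mem_closedBall, not_and, not_not] at hnotA
          by_cases hlt : dist x₃ p < R
          · right; exact le_antisymm (hnotA hlt) hge
          · left; exact le_antisymm hle' (not_lt.1 hlt)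
        rcases hcases with hR | hR2
        · -- outer sphere : bar = K
          have hbarK : bar x₃ = K := by
            rw [hbarval, hKdef, ← hR, dist_eq_norm]
          have : vf x₃ = W x₃ - 1 := by rw [hvval, hbarK]; ring
          rw [this] at hvx₃
          linarith [hle x₃]
        · -- inner sphere
          have hx₃sph : x₃ ∈ Metric.sphere p (R/2) := Metric.mem_sphere.2 hR2
          have hbarh₀ : bar x₃ - K = h₀ := by
            rw [hbarval, hh₀def, ← hR2, dist_eq_norm]
          have hWle : W x₃ ≤ W x₂ := hx₂max hx₃sph
          have : vf x₃ ≤ (W x₂ - 1) + ε * h₀ := by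
            rw [hvval, hbarh₀]
            have := mul_le_mul_of_nonneg_left (le_refl h₀) hεpos.le
            linarith
          rw [hεh₀] at this
          simp only [hδdef] at this
          linarith
      have hloc : IsLocalMax vf x₃ := by
        have hnhds : A ∈ nhds x₃ := hAopen.mem_nhds hx₃A
        filter_upwards [hnhds] with y hy
        exact hx₃max (subset_closure hy)
      -- second derivative test
      have hsum : (∑ i : Fin n, fderiv ℝ (fun y => fderiv ℝ vf y (EuclideanSpace.single i 1))
          x₃ (EuclideanSpace.single i 1)) ≤ 0 := by
        apply Finset.sum_nonpos
        intro i _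
        exact directional_secondDerivTest hvf2 hloc (EuclideanSpace.single i 1)
      have hexp : ∀ i : Fin n, fderiv ℝ (fun y => fderiv ℝ vf y (EuclideanSpace.single i 1))
          x₃ (EuclideanSpace.single i 1)
          = fderiv ℝ (fun y => fderiv ℝ W y (EuclideanSpace.single i 1)) x₃
              (EuclideanSpace.single i 1)
            + ε * fderiv ℝ (fun y => fderiv ℝ bar y (EuclideanSpace.single i 1)) x₃
              (EuclideanSpace.single i 1) := by
        intro i
        have h1 := second_fderiv_add_mul (f := fun z => W z - (1 + ε * K))
          (hW2.sub contDiff_const) (barrier_contDiff p α) ε x₃ (EuclideanSpace.single i 1)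
        have h2 := second_fderiv_sub_const W (1 + ε * K) x₃ (EuclideanSpace.single i 1)
        rw [hvfdef]
        rw [h1, h2]
      have hsum2 : (∑ i : Fin n, fderiv ℝ (fun y => fderiv ℝ W y (EuclideanSpace.single i 1))
            x₃ (EuclideanSpace.single i 1))
          + ε * ((4 * α ^ 2 * ‖x₃ - p‖ ^ 2 - 2 * n * α) * Real.exp (-α * ⟪x₃ - p, x₃ - p⟫))
          ≤ 0 := by
        have := hsum
        simp only [hexp] at this
        rw [Finset.sum_add_distrib, ← Finset.mul_sum] at this
        rw [← barrier_lap p α x₃]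
        exact this
      -- lower bounds
      have hlapW := GL_lap_lower u hu hsol x₃
      have hWx₃le : W x₃ ≤ 1 := hle x₃
      have hlow1 : 2 * (W x₃ - 1) ≤ (∑ i : Fin n, fderiv ℝ
          (fun y => fderiv ℝ W y (EuclideanSpace.single i 1)) x₃ (EuclideanSpace.single i 1)) := by
        have h3 : 2 * ((‖u x₃‖ ^ 2 - 1) * ‖u x₃‖ ^ 2) ≥ 2 * (W x₃ - 1) := by
          rw [← hWval]
          nlinarith [hle x₃, hWval x₃, sq_nonneg (W x₃ - 1)]
        exact le_trans h3.le hlapW  -- careful: hlapW : sum ≥ 2*((..)*..)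
      have hx₃r : R/2 < dist x₃ p := by
        have := hx₃A.2
        simpa [Metric.mem_closedBall] using this
      have hEpos : 0 < Real.exp (-α * ⟪x₃ - p, x₃ - p⟫) := Real.exp_pos _
      have hlow2 : 2 * (bar x₃ - K)
          ≤ (4 * α ^ 2 * ‖x₃ - p‖ ^ 2 - 2 * n * α) * Real.exp (-α * ⟪x₃ - p, x₃ - p⟫) := by
        have hr2 : (R/2)^2 ≤ ‖x₃ - p‖^2 := by
          have h4 : R/2 ≤ ‖x₃ - p‖ := by rw [← dist_eq_norm]; linarith
          nlinarith [hRpos]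
        have hcoef : 2 ≤ 4 * α ^ 2 * ‖x₃ - p‖ ^ 2 - 2 * n * α := by
          have h5 : α^2 * R^2 ≤ 4 * α^2 * (R/2)^2 := by ring_nf; nlinarith [sq_nonneg α]
          have h6 : 4 * α^2 * (R/2)^2 ≤ 4 * α^2 * ‖x₃ - p‖^2 :=
            mul_le_mul_of_nonneg_left hr2 (by positivity)
          have h7 : α * (2*(n:ℝ)+2) ≤ α * (α * R^2) := mul_le_mul_of_nonneg_left hαR hαpos.le
          have h8 : (2:ℝ) ≤ 2 * α := by linarith
          nlinarith
        have hbE : bar x₃ - K ≤ Real.exp (-α * ⟪x₃ - p, x₃ - p⟫) := by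
          rw [hbardef]
          simp only []
          linarith [hKpos]
        nlinarith
      have hfinal : 2 * vf x₃ ≤ 0 := by
        have h9 : ε * (2 * (bar x₃ - K)) ≤ ε * ((4 * α ^ 2 * ‖x₃ - p‖ ^ 2 - 2 * n * α)
            * Real.exp (-α * ⟪x₃ - p, x₃ - p⟫)) := mul_le_mul_of_nonneg_left hlow2 hεpos.le
        rw [hvval]
        nlinarith [hsum2, hlow1]
      linarith
    -- Hopf derivative contradiction at y₀
    set γ := fun t : ℝ => y₀ + t • (p - y₀) with hγdef
    have hγdist : ∀ t : ℝ, 0 ≤ t → t ≤ 1 → dist (γ t) p = (1 - t) * R := by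
      intro t ht0 ht1
      have h1 : γ t - p = (1 - t) • (y₀ - p) := by rw [hγdef]; module
      rw [dist_eq_norm, h1, norm_smul, Real.norm_eq_abs, abs_of_nonneg (by linarith)]
      rw [← dist_eq_norm, dist_comm, hdisty]
    set φ := fun t : ℝ => W (γ t) - 1 with hφdef
    set ψ := fun t : ℝ => -ε * (Real.exp (-α * ((1-t)^2 * R^2)) - K) with hψdef
    have hφderiv : HasDerivAt φ 0 0 := by
      have h1 := deriv_along_line (f := fun z => W z - 1) (hW2.sub contDiff_const) y₀ (p - y₀) 0
      have h2 : y₀ + (0:ℝ) • (p - y₀) = y₀ := by simp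
      rw [h2] at h1
      have h3 : fderiv ℝ (fun z => W z - 1) y₀ (p - y₀) = 0 := by
        rw [fderiv_sub_const, hfd0]; rfl
      rw [h3] at h1
      exact h1
    have hψderiv : HasDerivAt ψ (-ε * (Real.exp (-α * R^2) * (2*α*R^2))) 0 := by
      have h1 : HasDerivAt (fun t : ℝ => 1 - t) (-1) 0 := by
        exact (hasDerivAt_id (0:ℝ)).const_sub 1
      have h2 : HasDerivAt (fun t : ℝ => (1-t)^2) (2 * (1 - (0:ℝ))^1 * (-1)) 0 := h1.pow 2
      have h3 : HasDerivAt (fun t : ℝ => (1-t)^2 * R^2) ((2 * (1 - (0:ℝ))^1 * (-1)) * R^2) 0 :=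
        h2.mul_const (R^2)
      have h4 : HasDerivAt (fun t : ℝ => -α * ((1-t)^2 * R^2))
          (-α * ((2 * (1 - (0:ℝ))^1 * (-1)) * R^2)) 0 := h3.const_mul (-α)
      have h5 := h4.exp
      have h6 := (h5.sub_const K).const_mul (-ε)
      convert h6 using 1
      norm_num
      · rfl
      · rfl
      norm_num
      left; ring
    have hφψ0 : φ 0 = ψ 0 := by
      simp only [hφdef, hψdef, hγdef]
      simp [hWy₀, hKdef]
    have hlefilter : ∀ᶠ t in nhdsWithin 0 (Set.Ioi 0), φ t ≤ ψ t := by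
      filter_upwards [Ioo_mem_nhdsGT_of_mem (Set.left_mem_Ico.2 (by norm_num : (0:ℝ) < 1/2))]
        with t ht
      obtain ⟨ht0, ht12⟩ := ht
      have hd := hγdist t ht0.le (by linarith)
      have hmem : γ t ∈ A := by
        rw [hAdef]
        constructor
        · rw [Metric.mem_ball, hd]
          nlinarith
        · simp only [Metric.mem_closedBall, not_le]
          rw [hd]
          nlinarith
      have hv := hweak (γ t) (subset_closure hmem)
      rw [hvval] at hv
      have hbγ : bar (γ t) = Real.exp (-α * ((1-t)^2 * R^2)) := by
        rw [hbarval, ← dist_eq_norm, hd]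
        congr 2
        ring
      rw [hbγ] at hv
      simp only [hφdef, hψdef]
      linarith
    have hcontr := deriv_le_right hφderiv hψderiv hφψ0 hlefilter
    have : 0 < ε * (Real.exp (-α * R^2) * (2*α*R^2)) := by positivity
    linarith
end GLpart2

theorem ginzburg_landau_confinement {n m : ℕ}
    (u : EuclideanSpace ℝ (Fin n) → EuclideanSpace ℝ (Fin m))
    (hu : ContDiff ℝ 2 u) (hbdd : ∃ C : ℝ, ∀ x, ‖u x‖ ≤ C)
    (hsol : ∀ x, vectorLaplacian u x = (‖u x‖ ^ 2 - 1) • u x) :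
    (∀ x, ‖u x‖ ≤ 1) ∧ ((¬ ∃ c, ∀ x, u x = c) → ∀ x, ‖u x‖ < 1) := by
  have hle := GL_W_le_one u hu hbdd hsol
  have hle' : ∀ x, ‖u x‖ ≤ 1 := by
    intro x
    have h1 := hle x
    rw [real_inner_self_eq_norm_sq] at h1
    nlinarith [norm_nonneg (u x)]
  refine ⟨hle', ?_⟩
  intro hnc x
  by_contra hge
  push_neg at hge
  have hW : (inner ℝ (u x) (u x) : ℝ) = 1 := by
    rw [real_inner_self_eq_norm_sq]
    nlinarith [hle' x]
  rcases Nat.eq_zero_or_pos n with hn0 | hn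
  · subst hn0
    haveI : IsEmpty (Fin 0) := inferInstance
    haveI : Subsingleton (EuclideanSpace ℝ (Fin 0)) := inferInstance
    exact hnc ⟨u x, fun z => congrArg u (Subsingleton.elim z x)⟩
  · exact hnc (GL_no_touch hn u hu hsol hle x hW)
end

section
/- Let a, b, c ∈ ℝ² be three points not lying on a common line and let W(u) = |u−a|²|u−b|²|u−c|². Every bounded entire C² solution u : ℝⁿ → ℝ² of Δu = ∇W(u) satisfies u(x) ∈ T for all x ∈ ℝⁿ, where T is the closed triangle with vertices a, b, c. -/
open Filter Topology

lemma second_test_1d {φ : ℝ → ℝ} (hφ : ContDiff ℝ 2 φ) (hmax : ∀ t, φ t ≤ φ 0) :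
    deriv (deriv φ) 0 ≤ 0 := by
  by_contra h
  push_neg at h
  have hdiff : Differentiable ℝ φ := hφ.differentiable (by norm_num)
  have hd1 : ContDiff ℝ 1 (deriv φ) := by
    have := (contDiff_succ_iff_deriv (n := 1)).mp (by exact_mod_cast hφ)
    exact this.2.2
  have hd1diff : Differentiable ℝ (deriv φ) := hd1.differentiable (by norm_num)
  have h0 : deriv φ 0 = 0 := by
    have : IsLocalMax φ 0 := Filter.Eventually.of_forall hmax
    exact this.deriv_eq_zero
  have hda : HasDerivAt (deriv φ) (deriv (deriv φ) 0) 0 := (hd1diff 0).hasDerivAt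
  have hslope : Tendsto (slope (deriv φ) 0) (𝓝[≠] 0) (𝓝 (deriv (deriv φ) 0)) :=
    hasDerivAt_iff_tendsto_slope.mp hda
  have hpos : ∀ᶠ t in 𝓝[>] (0:ℝ), 0 < slope (deriv φ) 0 t := by
    have := hslope.mono_left (nhdsWithin_mono _ (fun t ht => ne_of_gt ht))
    exact this.eventually (eventually_gt_nhds h)
  obtain ⟨ε, hε, hball⟩ := Metric.mem_nhdsWithin_iff.mp hpos
  have hpos' : ∀ t ∈ Set.Ioo (0:ℝ) ε, 0 < deriv φ t := by
    intro t ht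
    have hs : 0 < slope (deriv φ) 0 t := by
      apply hball
      constructor
      · simp [abs_of_pos ht.1, ht.2, Real.dist_eq]
      · exact ht.1
    rw [slope_def_field, h0] at hs
    simp only [sub_zero] at hs
    rcases div_pos_iff.mp hs with ⟨h1, _⟩ | ⟨_, h2⟩
    · exact h1
    · linarith [ht.1]
  have hmono : StrictMonoOn φ (Set.Icc 0 ε) := by
    apply strictMonoOn_of_deriv_pos (convex_Icc 0 ε) hφ.continuous.continuousOn
    intro t ht
    rw [interior_Icc] at ht
    exact hpos' t ht
  have : φ 0 < φ ε := hmono (Set.left_mem_Icc.mpr hε.le) (Set.right_mem_Icc.mpr hε.le) hε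
  linarith [hmax ε]

lemma second_test {E : Type*} [NormedAddCommGroup E] [NormedSpace ℝ E]
    {w : E → ℝ} (hw : ContDiff ℝ 2 w) {y : E} (hmax : ∀ z, w z ≤ w y) (v : E) :
    fderiv ℝ (fun z => fderiv ℝ w z v) y v ≤ 0 := by
  set line : ℝ → E := fun t => y + t • v with hline
  have hlineC : ContDiff ℝ 2 line := contDiff_const.add (contDiff_id.smul contDiff_const)
  have hlined : ∀ t : ℝ, HasDerivAt line v t := by
    intro t
    have : HasDerivAt (fun t : ℝ => t • v) ((1:ℝ) • v) t := (hasDerivAt_id t).smul_const v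
    simpa [hline] using this.const_add y
  set φ : ℝ → ℝ := fun t => w (line t) with hφdef
  have hφ : ContDiff ℝ 2 φ := hw.comp hlineC
  have hwd : Differentiable ℝ w := hw.differentiable (by norm_num)
  have hd1 : ∀ t, deriv φ t = fderiv ℝ w (line t) v := by
    intro t
    exact ((hwd (line t)).hasFDerivAt.comp_hasDerivAt t (hlined t)).deriv
  set g : E → ℝ := fun z => fderiv ℝ w z v with hg
  have hgC : ContDiff ℝ 1 g := by
    have h1 : ContDiff ℝ 1 (fderiv ℝ w) := hw.fderiv_right (by norm_num)
    exact h1.clm_apply contDiff_const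
  have hgd : Differentiable ℝ g := hgC.differentiable (by norm_num)
  have hline0 : line 0 = y := by simp [hline]
  have hd2 : deriv (deriv φ) 0 = fderiv ℝ g y v := by
    have hderiv_eq : deriv φ = fun t => g (line t) := funext fun t => hd1 t
    rw [hderiv_eq]
    have := ((hgd (line 0)).hasFDerivAt.comp_hasDerivAt 0 (hlined 0)).deriv
    rw [hline0] at this
    exact this
  have := second_test_1d hφ (fun t => by simpa [hφdef, hline0] using hmax (line t))
  rw [hd2] at this
  exact this

lemma hasFDerivAt_normSq_sub {E : Type*} [NormedAddCommGroup E] [InnerProductSpace ℝ E]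
    (p z : E) : HasFDerivAt (fun x => ‖x - p‖ ^ 2) ((2:ℝ) • (innerSL ℝ (z - p))) z := by
  have hfun : (fun x : E => ‖x - p‖ ^ 2) = fun x => (inner ℝ (x - p) (x - p) : ℝ) := by
    funext x; rw [real_inner_self_eq_norm_sq]
  rw [hfun]
  have hid : HasFDerivAt (fun x : E => x - p) (ContinuousLinearMap.id ℝ E) z :=
    (hasFDerivAt_id z).sub_const p
  have h := hid.inner ℝ hid
  refine h.congr_fderiv ?_
  ext h'
  simp only [fderivInnerCLM_apply, ContinuousLinearMap.coe_comp', Function.comp_apply,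
    ContinuousLinearMap.prod_apply, ContinuousLinearMap.coe_id', id_eq,
    ContinuousLinearMap.coe_smul', Pi.smul_apply, innerSL_apply_apply, smul_eq_mul]
  rw [real_inner_comm (z - p) h']
  ring

lemma hasFDerivAt_inner_sub_const {E : Type*} [NormedAddCommGroup E] [InnerProductSpace ℝ E]
    (p e z : E) :
    HasFDerivAt (fun x : E => (inner ℝ (x - p) e : ℝ)) (innerSL ℝ e) z := by
  have hid : HasFDerivAt (fun x : E => x - p) (ContinuousLinearMap.id ℝ E) z :=
    (hasFDerivAt_id z).sub_const p
  have h := hid.inner ℝ (hasFDerivAt_const e z)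
  refine h.congr_fderiv ?_
  ext h'
  simp only [fderivInnerCLM_apply, ContinuousLinearMap.coe_comp', Function.comp_apply,
    ContinuousLinearMap.prod_apply, ContinuousLinearMap.coe_id', id_eq, innerSL_apply_apply,
    ContinuousLinearMap.zero_apply, inner_zero_right]
  rw [real_inner_comm e h']
  ring

lemma max_principle {n : ℕ} {κ : ℝ} (hκ : 0 < κ) {f : EuclideanSpace ℝ (Fin n) → ℝ}
    (hf : ContDiff ℝ 2 f) {M : ℝ} (hM : ∀ x, f x ≤ M)
    (hineq : ∀ x, 0 < f x → κ * f x ≤ ∑ i : Fin n,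
      fderiv ℝ (fun z => fderiv ℝ f z (EuclideanSpace.single i 1)) x
        (EuclideanSpace.single i 1))
    (x0 : EuclideanSpace ℝ (Fin n)) : f x0 ≤ 0 := by
  by_contra hpos
  push_neg at hpos
  set β := f x0 with hβ
  set η : ℝ := κ * β / (2 * n + 1) with hη
  have hηpos : 0 < η := by positivity
  set w : EuclideanSpace ℝ (Fin n) → ℝ := fun x => f x - η * ‖x - x0‖ ^ 2 with hw
  have hwC : ContDiff ℝ 2 w :=
    hf.sub (contDiff_const.mul ((contDiff_id.sub contDiff_const).norm_sq ℝ))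
  -- w attains a global max
  set S : Set (EuclideanSpace ℝ (Fin n)) := {x | w x0 ≤ w x} with hS
  have hwcont : Continuous w := hwC.continuous
  have hSclosed : IsClosed S := isClosed_le continuous_const hwcont
  have hSsub : S ⊆ Metric.closedBall x0 (Real.sqrt ((M - β) / η)) := by
    intro x hx
    simp only [hS, Set.mem_setOf_eq, hw] at hx
    have hx0 : w x0 = β := by simp [hw, hβ]
    have hxx : η * ‖(x0 - x0 : EuclideanSpace ℝ (Fin n))‖ ^ 2 = 0 := by simp
    have h1 : η * ‖x - x0‖ ^ 2 ≤ M - β := by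
      have hMx := hM x; nlinarith [hx, hx0]
    have h2 : ‖x - x0‖ ^ 2 ≤ (M - β) / η := by
      rw [le_div_iff₀ hηpos]; linarith
    rw [Metric.mem_closedBall, dist_eq_norm]
    rw [show x - x0 = x - x0 from rfl] at h2
    calc ‖x - x0‖ = Real.sqrt (‖x - x0‖ ^ 2) := by rw [Real.sqrt_sq (norm_nonneg _)]
    _ ≤ Real.sqrt ((M - β) / η) := Real.sqrt_le_sqrt h2
  have hScompact : IsCompact S :=
    (isCompact_closedBall x0 _).of_isClosed_subset hSclosed hSsub
  have hSne : S.Nonempty := ⟨x0, by simp [hS]⟩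
  obtain ⟨y, hyS, hymax⟩ := hScompact.exists_isMaxOn hSne hwcont.continuousOn
  have hglobal : ∀ z, w z ≤ w y := by
    intro z
    by_cases hz : z ∈ S
    · exact hymax hz
    · have : w z < w x0 := by simpa [hS, Set.mem_setOf_eq, not_le] using hz
      exact this.le.trans (hyS : w x0 ≤ w y)
  -- f y ≥ β > 0
  have hwx0 : w x0 = β := by simp [hw, hβ]
  have hfy : β ≤ f y := by
    have h1 : w x0 ≤ w y := hyS
    have h2 : 0 ≤ η * ‖y - x0‖ ^ 2 := by positivity
    have hxx : η * ‖(x0 - x0 : EuclideanSpace ℝ (Fin n))‖ ^ 2 = 0 := by simp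
    simp only [hw] at h1
    nlinarith [h1]
  -- second derivative computation
  have hfd1 : ContDiff ℝ 1 (fderiv ℝ f) := hf.fderiv_right (by norm_num)
  have key : ∀ i : Fin n,
      fderiv ℝ (fun z => fderiv ℝ w z (EuclideanSpace.single i 1)) y
        (EuclideanSpace.single i 1)
      = fderiv ℝ (fun z => fderiv ℝ f z (EuclideanSpace.single i 1)) y
          (EuclideanSpace.single i 1) - 2 * η := by
    intro i
    set e : EuclideanSpace ℝ (Fin n) := EuclideanSpace.single i 1 with he
    have hee : (inner ℝ e e : ℝ) = 1 := by
      rw [real_inner_self_eq_norm_sq, EuclideanSpace.norm_single]; norm_num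
    have hwfd : ∀ z, fderiv ℝ w z e = fderiv ℝ f z e - η * (2 * (inner ℝ (z - x0) e : ℝ)) := by
      intro z
      have hz : HasFDerivAt w
          (fderiv ℝ f z - η • ((2:ℝ) • (innerSL ℝ (z - x0)))) z :=
        ((hf.differentiable (by norm_num) z).hasFDerivAt).sub
          ((hasFDerivAt_normSq_sub x0 z).const_mul η)
      rw [hz.fderiv]
      simp only [ContinuousLinearMap.sub_apply, ContinuousLinearMap.coe_smul',
        Pi.smul_apply, innerSL_apply_apply, smul_eq_mul]
      try ring
    have hfun : (fun z => fderiv ℝ w z e)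
        = fun z => fderiv ℝ f z e - η * (2 * (inner ℝ (z - x0) e : ℝ)) := funext hwfd
    rw [hfun]
    have hA : HasFDerivAt (fun z => fderiv ℝ f z e)
        (fderiv ℝ (fun z => fderiv ℝ f z e) y) y :=
      (((hfd1.clm_apply contDiff_const).differentiable (by norm_num)) y).hasFDerivAt
    have hB : HasFDerivAt (fun z : EuclideanSpace ℝ (Fin n) =>
        η * (2 * (inner ℝ (z - x0) e : ℝ))) ((η * 2) • innerSL ℝ e) y := by
      have := ((hasFDerivAt_inner_sub_const x0 e y).const_mul 2).const_mul η
      simpa [smul_smul] using this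
    have h2 : fderiv ℝ (fun z => fderiv ℝ f z e - η * (2 * (inner ℝ (z - x0) e : ℝ))) y = _ :=
      (hA.sub hB).fderiv
    rw [h2]
    simp only [ContinuousLinearMap.sub_apply, ContinuousLinearMap.coe_smul',
      Pi.smul_apply, innerSL_apply_apply, smul_eq_mul]
    rw [hee]
    ring
  have hlapw : (∑ i : Fin n,
      fderiv ℝ (fun z => fderiv ℝ w z (EuclideanSpace.single i 1)) y
        (EuclideanSpace.single i 1))
      = (∑ i : Fin n, fderiv ℝ (fun z => fderiv ℝ f z (EuclideanSpace.single i 1)) y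
          (EuclideanSpace.single i 1)) - n * (2 * η) := by
    rw [Finset.sum_congr rfl (fun i _ => key i), Finset.sum_sub_distrib,
      Finset.sum_const, Finset.card_univ, Fintype.card_fin, nsmul_eq_mul]
    try ring
  have hlapw_nonpos : (∑ i : Fin n,
      fderiv ℝ (fun z => fderiv ℝ w z (EuclideanSpace.single i 1)) y
        (EuclideanSpace.single i 1)) ≤ 0 :=
    Finset.sum_nonpos fun i _ => second_test hwC hglobal _
  have hfyineq := hineq y (lt_of_lt_of_le hpos hfy)
  have hfin : κ * f y ≤ n * (2 * η) := by linarith [hlapw ▸ hlapw_nonpos]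
  have : κ * β ≤ n * (2 * η) := le_trans (by nlinarith) hfin
  rw [hη] at this
  have hlt : (n : ℝ) * (2 * (κ * β / (2 * n + 1))) < κ * β := by
    rw [div_eq_mul_inv]
    have h2n : (0:ℝ) < 2 * n + 1 := by positivity
    rw [show (n:ℝ) * (2 * (κ * β * (2 * ↑n + 1)⁻¹)) = (2*n) * (κ*β) / (2*n+1) by ring]
    rw [div_lt_iff₀ h2n]
    nlinarith [mul_pos hκ hpos]
  linarith

lemma lap_comp_clm {n m : ℕ} (ℓ : EuclideanSpace ℝ (Fin m) →L[ℝ] ℝ) (s : ℝ)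
    {u : EuclideanSpace ℝ (Fin n) → EuclideanSpace ℝ (Fin m)} (hu : ContDiff ℝ 2 u)
    (x : EuclideanSpace ℝ (Fin n)) :
    (∑ i : Fin n, fderiv ℝ (fun z => fderiv ℝ (fun x' => ℓ (u x') - s) z
        (EuclideanSpace.single i 1)) x (EuclideanSpace.single i 1))
      = ℓ (vectorLaplacian u x) := by
  have hud : Differentiable ℝ u := hu.differentiable (by norm_num)
  have hfd1 : ContDiff ℝ 1 (fderiv ℝ u) := hu.fderiv_right (by norm_num)
  rw [vectorLaplacian, map_sum]
  apply Finset.sum_congr rfl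
  intro i _
  set e := EuclideanSpace.single i (1:ℝ) with he
  have h1 : ∀ z, fderiv ℝ (fun x' => ℓ (u x') - s) z e = ℓ (fderiv ℝ u z e) := by
    intro z
    have : HasFDerivAt (fun x' => ℓ (u x') - s) (ℓ.comp (fderiv ℝ u z)) z :=
      (ℓ.hasFDerivAt.comp z (hud z).hasFDerivAt).sub_const s
    rw [this.fderiv]; rfl
  rw [funext h1]
  have hg : Differentiable ℝ (fun z => fderiv ℝ u z e) :=
    (hfd1.clm_apply contDiff_const).differentiable (by norm_num)
  have : HasFDerivAt (fun z => ℓ (fderiv ℝ u z e))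
      (ℓ.comp (fderiv ℝ (fun z => fderiv ℝ u z e) x)) x :=
    ℓ.hasFDerivAt.comp x (hg x).hasFDerivAt
  rw [this.fderiv]; rfl

lemma gradient_W_inner {E : Type*} [NormedAddCommGroup E] [InnerProductSpace ℝ E]
    [CompleteSpace E] (a b c : E) (v ν : E) :
    (inner ℝ ν (gradient (fun v => ‖v - a‖ ^ 2 * ‖v - b‖ ^ 2 * ‖v - c‖ ^ 2) v) : ℝ)
      = 2 * (‖v - b‖ ^ 2 * ‖v - c‖ ^ 2 * (inner ℝ (v - a) ν : ℝ)
           + ‖v - a‖ ^ 2 * ‖v - c‖ ^ 2 * (inner ℝ (v - b) ν : ℝ)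
           + ‖v - a‖ ^ 2 * ‖v - b‖ ^ 2 * (inner ℝ (v - c) ν : ℝ)) := by
  set W : E → ℝ := fun v => ‖v - a‖ ^ 2 * ‖v - b‖ ^ 2 * ‖v - c‖ ^ 2 with hWdef
  have ha := hasFDerivAt_normSq_sub a v
  have hb := hasFDerivAt_normSq_sub b v
  have hc := hasFDerivAt_normSq_sub c v
  have h1 : HasFDerivAt (fun x => ‖x - a‖ ^ 2 * ‖x - b‖ ^ 2)
      (‖v - a‖ ^ 2 • ((2:ℝ) • (innerSL ℝ (v - b))) +
       ‖v - b‖ ^ 2 • ((2:ℝ) • (innerSL ℝ (v - a)))) v := ha.mul hb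
  have hW : HasFDerivAt W
      ((‖v - a‖ ^ 2 * ‖v - b‖ ^ 2) • ((2:ℝ) • (innerSL ℝ (v - c))) +
       ‖v - c‖ ^ 2 • (‖v - a‖ ^ 2 • ((2:ℝ) • (innerSL ℝ (v - b))) +
         ‖v - b‖ ^ 2 • ((2:ℝ) • (innerSL ℝ (v - a))))) v := h1.mul hc
  have hgrad : (inner ℝ ν (gradient W v) : ℝ) = fderiv ℝ W v ν := by
    rw [gradient]
    rw [real_inner_comm]
    rw [← InnerProductSpace.toDual_apply_apply]
    rw [LinearIsometryEquiv.apply_symm_apply]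
  rw [hgrad, hW.fderiv]
  simp only [ContinuousLinearMap.add_apply, ContinuousLinearMap.coe_smul',
    Pi.smul_apply, innerSL_apply_apply, smul_eq_mul]
  ring

lemma sum_prod_lower {E : Type*} [NormedAddCommGroup E]
    {a b c : E} {δ : ℝ} (hδpos : 0 < δ)
    (hab : δ ≤ ‖a - b‖) (hac : δ ≤ ‖a - c‖) (hbc : δ ≤ ‖b - c‖) (v : E) :
    (δ / 2) ^ 4 ≤ ‖v - b‖ ^ 2 * ‖v - c‖ ^ 2 + ‖v - a‖ ^ 2 * ‖v - c‖ ^ 2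
      + ‖v - a‖ ^ 2 * ‖v - b‖ ^ 2 := by
  have tri : ∀ p q : E, ‖p - q‖ ≤ ‖v - p‖ + ‖v - q‖ := by
    intro p q
    calc ‖p - q‖ = ‖(p - v) + (v - q)‖ := by abel_nf
    _ ≤ ‖p - v‖ + ‖v - q‖ := norm_add_le _ _
    _ = ‖v - p‖ + ‖v - q‖ := by rw [norm_sub_rev]
  have na := norm_nonneg (v - a); have nb := norm_nonneg (v - b); have nc := norm_nonneg (v - c)
  by_cases h1 : ‖v - a‖ < δ / 2
  · have hvb : δ / 2 ≤ ‖v - b‖ := by have := tri a b; linarith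
    have hvc : δ / 2 ≤ ‖v - c‖ := by have := tri a c; linarith
    nlinarith [sq_nonneg (‖v-a‖*‖v-c‖), sq_nonneg (‖v-a‖*‖v-b‖), mul_le_mul hvb hvc (by linarith) nb]
  · push_neg at h1
    by_cases h2 : ‖v - b‖ < δ / 2
    · have hvc : δ / 2 ≤ ‖v - c‖ := by have := tri b c; linarith
      nlinarith [sq_nonneg (‖v-b‖*‖v-c‖), sq_nonneg (‖v-a‖*‖v-b‖), mul_le_mul h1 hvc (by linarith) na]
    · push_neg at h2
      nlinarith [sq_nonneg (‖v-b‖*‖v-c‖), sq_nonneg (‖v-a‖*‖v-c‖), mul_le_mul h1 h2 (by linarith) na]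

theorem allen_cahn_triangle_confinement {n : ℕ}
    (a b c : EuclideanSpace ℝ (Fin 2))
    (habc : ¬ Collinear ℝ ({a, b, c} : Set (EuclideanSpace ℝ (Fin 2))))
    (W : EuclideanSpace ℝ (Fin 2) → ℝ)
    (hW : W = fun v => ‖v - a‖ ^ 2 * ‖v - b‖ ^ 2 * ‖v - c‖ ^ 2)
    (u : EuclideanSpace ℝ (Fin n) → EuclideanSpace ℝ (Fin 2))
    (hu : ContDiff ℝ 2 u) (hbdd : ∃ C : ℝ, ∀ x, ‖u x‖ ≤ C)
    (hsol : ∀ x, vectorLaplacian u x = gradient W (u x)) :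
    ∀ x, u x ∈ convexHull ℝ ({a, b, c} : Set (EuclideanSpace ℝ (Fin 2))) := by
  intro x0
  by_contra hx0
  -- distinct vertices
  have hab : a ≠ b := by
    rintro rfl
    exact habc (by
      have : ({a, a, c} : Set (EuclideanSpace ℝ (Fin 2))) = {a, c} := by
        simp [Set.insert_comm]
      rw [this]; exact collinear_pair ℝ a c)
  have hac : a ≠ c := by
    rintro rfl
    exact habc (by
      have : ({a, b, a} : Set (EuclideanSpace ℝ (Fin 2))) = {a, b} := by
        rw [Set.pair_comm b a]
        exact Set.insert_eq_self.mpr (by simp)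
      rw [this]; exact collinear_pair ℝ a b)
  have hbc : b ≠ c := by
    rintro rfl
    exact habc (by
      have : ({a, b, b} : Set (EuclideanSpace ℝ (Fin 2))) = {a, b} := by
        simp
      rw [this]; exact collinear_pair ℝ a b)
  -- separation
  have hTconv : Convex ℝ (convexHull ℝ ({a, b, c} : Set (EuclideanSpace ℝ (Fin 2)))) :=
    convex_convexHull ℝ _
  have hTclosed : IsClosed (convexHull ℝ ({a, b, c} : Set (EuclideanSpace ℝ (Fin 2)))) := by
    have hfin : ({a, b, c} : Set (EuclideanSpace ℝ (Fin 2))).Finite := by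
      exact (Set.finite_singleton c).insert b |>.insert a
    exact (hfin.isCompact_convexHull (𝕜 := ℝ)).isClosed
  obtain ⟨ℓ, s, hsep1, hsep2⟩ := geometric_hahn_banach_closed_point hTconv hTclosed hx0
  set ν : EuclideanSpace ℝ (Fin 2) := (InnerProductSpace.toDual ℝ _).symm ℓ with hν
  have hℓν : ∀ w : EuclideanSpace ℝ (Fin 2), ℓ w = (inner ℝ ν w : ℝ) := by
    intro w
    rw [hν, ← InnerProductSpace.toDual_apply_apply, LinearIsometryEquiv.apply_symm_apply]
  -- the function
  set f : EuclideanSpace ℝ (Fin n) → ℝ := fun x => ℓ (u x) - s with hf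
  have hfC : ContDiff ℝ 2 f := (ℓ.contDiff.comp hu).sub contDiff_const
  obtain ⟨C, hC⟩ := hbdd
  have hMbound : ∀ x, f x ≤ ‖ℓ‖ * C - s := by
    intro x
    have h1 : ℓ (u x) ≤ ‖ℓ‖ * ‖u x‖ := le_trans (le_abs_self _) (ℓ.le_opNorm _)
    have h2 : ‖ℓ‖ * ‖u x‖ ≤ ‖ℓ‖ * C :=
      mul_le_mul_of_nonneg_left (hC x) (norm_nonneg _)
    simp only [hf]; linarith
  -- vertices in hull
  have hmem : ∀ p ∈ ({a, b, c} : Set (EuclideanSpace ℝ (Fin 2))), ℓ p < s := fun p hp =>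
    hsep1 p (subset_convexHull ℝ _ hp)
  have hℓa : ℓ a < s := hmem a (by simp)
  have hℓb : ℓ b < s := hmem b (by simp)
  have hℓc : ℓ c < s := hmem c (by simp)
  -- δ and κ
  set δ : ℝ := min (min ‖a - b‖ ‖a - c‖) ‖b - c‖ with hδ
  have hδpos : 0 < δ := by
    apply lt_min (lt_min _ _) _
    · exact norm_pos_iff.mpr (sub_ne_zero.mpr hab)
    · exact norm_pos_iff.mpr (sub_ne_zero.mpr hac)
    · exact norm_pos_iff.mpr (sub_ne_zero.mpr hbc)
  set κ : ℝ := 2 * (δ / 2) ^ 4 with hκdef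
  have hκpos : 0 < κ := by positivity
  -- differential inequality
  have hineq : ∀ x, 0 < f x → κ * f x ≤ ∑ i : Fin n,
      fderiv ℝ (fun z => fderiv ℝ f z (EuclideanSpace.single i 1)) x
        (EuclideanSpace.single i 1) := by
    intro x hfx
    have hlap : (∑ i : Fin n, fderiv ℝ (fun z => fderiv ℝ f z (EuclideanSpace.single i 1)) x
        (EuclideanSpace.single i 1)) = ℓ (vectorLaplacian u x) := lap_comp_clm ℓ s hu x
    rw [hlap, hsol x, hℓν, hW]
    rw [gradient_W_inner a b c (u x) ν]
    set v := u x with hv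
    have hinner : ∀ p : EuclideanSpace ℝ (Fin 2), (inner ℝ (v - p) ν : ℝ) = ℓ v - ℓ p := by
      intro p
      rw [real_inner_comm, ← hℓν, map_sub]
    set ta : ℝ := (inner ℝ (v - a) ν : ℝ) with htadef
    set tb : ℝ := (inner ℝ (v - b) ν : ℝ) with htbdef
    set tc : ℝ := (inner ℝ (v - c) ν : ℝ) with htcdef
    have hta : f x ≤ ta := by rw [htadef, hinner]; simp only [hf]; linarith
    have htb : f x ≤ tb := by rw [htbdef, hinner]; simp only [hf]; linarith
    have htc : f x ≤ tc := by rw [htcdef, hinner]; simp only [hf]; linarith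
    have hsum : (δ / 2) ^ 4 ≤ ‖v - b‖ ^ 2 * ‖v - c‖ ^ 2 + ‖v - a‖ ^ 2 * ‖v - c‖ ^ 2
        + ‖v - a‖ ^ 2 * ‖v - b‖ ^ 2 :=
      sum_prod_lower hδpos (le_trans (min_le_left _ _) (min_le_left _ _))
        (le_trans (min_le_left _ _) (min_le_right _ _)) (min_le_right _ _) v
    set Pa : ℝ := ‖v - b‖ ^ 2 * ‖v - c‖ ^ 2 with hPadef
    set Pb : ℝ := ‖v - a‖ ^ 2 * ‖v - c‖ ^ 2 with hPbdef
    set Pc : ℝ := ‖v - a‖ ^ 2 * ‖v - b‖ ^ 2 with hPcdef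
    have hPa : (0:ℝ) ≤ Pa := by rw [hPadef]; positivity
    have hPb : (0:ℝ) ≤ Pb := by rw [hPbdef]; positivity
    have hPc : (0:ℝ) ≤ Pc := by rw [hPcdef]; positivity
    have h1 : (δ / 2) ^ 4 * f x ≤ Pa * f x + Pb * f x + Pc * f x := by
      calc (δ / 2) ^ 4 * f x ≤ (Pa + Pb + Pc) * f x :=
            mul_le_mul_of_nonneg_right hsum hfx.le
      _ = Pa * f x + Pb * f x + Pc * f x := by ring
    have h2 := mul_le_mul_of_nonneg_left hta hPa
    have h3 := mul_le_mul_of_nonneg_left htb hPb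
    have h4 := mul_le_mul_of_nonneg_left htc hPc
    rw [hκdef]
    clear_value ta tb tc Pa Pb Pc f δ v
    have final : 2 * (δ / 2) ^ 4 * f x ≤ 2 * (Pa * ta + Pb * tb + Pc * tc) := by linarith
    exact final
  have h0 : ℓ (u x0) - s ≤ 0 := max_principle hκpos hfC hMbound hineq x0
  linarith
end

section
/- Let a = (0, a₂), b = (0, −a₂), c = (c₁, c₂) with a₂ > 0 and c₁ < 0, and let W(u) = |u−a|²|u−b|²|u−c|². Then for every u = (u₁, u₂) ∈ ℝ² with u₁ > 0, the first component of ∇W(u) is strictly positive. -/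
open InnerProductSpace

lemma grad_sq_dist {F : Type*} [NormedAddCommGroup F] [InnerProductSpace ℝ F]
    [CompleteSpace F] (a u : F) :
    HasFDerivAt (fun v => ‖v - a‖ ^ 2) (toDual ℝ F ((2:ℝ) • (u - a))) u := by
  have h : HasFDerivAt (fun v : F => v - a) (ContinuousLinearMap.id ℝ F) u :=
    (hasFDerivAt_id u).sub_const a
  have h2 := h.inner ℝ h
  have heq : (fun t : F => (inner ℝ (t - a) (t - a) : ℝ)) = fun v => ‖v - a‖ ^ 2 := by
    ext v; rw [real_inner_self_eq_norm_sq]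
  rw [heq] at h2
  refine h2.congr_fderiv ?_
  symm
  ext x
  simp only [toDual_apply_apply, fderivInnerCLM_apply, ContinuousLinearMap.comp_apply,
    ContinuousLinearMap.prod_apply, ContinuousLinearMap.coe_id', id_eq,
    inner_smul_left, RCLike.conj_to_real]
  rw [real_inner_comm x (u - a)]
  ring

theorem triple_well_gradient_first_component_pos
    (a₂ c₁ c₂ : ℝ) (ha₂ : 0 < a₂) (hc₁ : c₁ < 0)
    (a b c : EuclideanSpace ℝ (Fin 2))
    (ha : a 0 = 0) (ha' : a 1 = a₂) (hb : b 0 = 0) (hb' : b 1 = -a₂)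
    (hc : c 0 = c₁) (hc' : c 1 = c₂)
    (W : EuclideanSpace ℝ (Fin 2) → ℝ)
    (hW : W = fun v => ‖v - a‖ ^ 2 * ‖v - b‖ ^ 2 * ‖v - c‖ ^ 2)
    (u : EuclideanSpace ℝ (Fin 2)) (hu : u 0 > 0) :
    0 < gradient W u 0 := by
  have hfa := grad_sq_dist a u
  have hfb := grad_sq_dist b u
  have hfc := grad_sq_dist c u
  set A := ‖u - a‖ ^ 2 with hA
  set B := ‖u - b‖ ^ 2 with hB
  set C := ‖u - c‖ ^ 2 with hC
  have hprod : HasFDerivAt W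
      ((A * B) • (toDual ℝ _ ((2:ℝ) • (u - c))) +
        C • (A • (toDual ℝ _ ((2:ℝ) • (u - b))) + B • (toDual ℝ _ ((2:ℝ) • (u - a))))) u := by
    rw [hW]
    exact (hfa.mul hfb).mul hfc
  have hgrad := hprod.hasGradientAt
  rw [hgrad.gradient]
  have h0 : u ≠ a := fun h => by rw [h, ha] at hu; exact lt_irrefl 0 hu
  have h1 : u ≠ b := fun h => by rw [h, hb] at hu; exact lt_irrefl 0 hu
  have h2 : u ≠ c := fun h => by rw [h, hc] at hu; linarith
  have hApos : 0 < A := by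
    have := norm_pos_iff.mpr (sub_ne_zero.mpr h0); positivity
  have hBpos : 0 < B := by
    have := norm_pos_iff.mpr (sub_ne_zero.mpr h1); positivity
  have hCpos : 0 < C := by
    have := norm_pos_iff.mpr (sub_ne_zero.mpr h2); positivity
  have hcoord : u 0 - c 0 > 0 := by rw [hc]; linarith
  simp only [map_add, map_smul, LinearIsometryEquiv.symm_apply_apply,
    PiLp.add_apply, PiLp.smul_apply, PiLp.sub_apply, smul_eq_mul, ha, hb]
  nlinarith [mul_pos (mul_pos hApos hBpos) hcoord, mul_pos (mul_pos hCpos hBpos) hu,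
    mul_pos (mul_pos hCpos hApos) hu]
end

section
/- Let g₁₁, g₂₂, g₁₂, μ > 0 with g₁₂ > √(g₁₁ g₂₂), and set a = √μ / g₁₁^{1/4}, b = √μ / g₂₂^{1/4}. Every bounded entire C² solution (u₁, u₂) : ℝⁿ → ℝ² of the system Δu₁ = g₁₁(u₁² − a²)u₁ + g₁₂ u₁ u₂², Δu₂ = g₂₂(u₂² − b²)u₂ + g₁₂ u₁² u₂ satisfies u₁(x)²/a² + u₂(x)²/b² ≤ 1 for all x ∈ ℝⁿ. -/
set_option maxHeartbeats 1000000

open RealInnerProductSpace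

section Helpers
variable {E : Type*} [NormedAddCommGroup E] [NormedSpace ℝ E]

lemma fderiv_apply_differentiable (f : E → ℝ) (hf : ContDiff ℝ 2 f) (e : E) :
    Differentiable ℝ (fun y => fderiv ℝ f y e) := by
  have h1 : ContDiff ℝ 1 (fderiv ℝ f) := hf.fderiv_right (by norm_num)
  exact ((ContinuousLinearMap.apply ℝ ℝ e).contDiff.comp h1).differentiable one_ne_zero

lemma D2_const_mul (f : E → ℝ) (hf : ContDiff ℝ 2 f) (c : ℝ) (x e : E) :
    fderiv ℝ (fun y => fderiv ℝ (fun z => c * f z) y e) x e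
      = c * fderiv ℝ (fun y => fderiv ℝ f y e) x e := by
  have hdf : Differentiable ℝ f := hf.differentiable two_ne_zero
  have h1 : (fun y => fderiv ℝ (fun z => c * f z) y e) = fun y => c * fderiv ℝ f y e := by
    funext y; rw [fderiv_const_mul (hdf y)]; simp
  rw [h1, fderiv_const_mul (fderiv_apply_differentiable f hf e x)]; simp

lemma D2_add (f g : E → ℝ) (hf : ContDiff ℝ 2 f) (hg : ContDiff ℝ 2 g) (x e : E) :
    fderiv ℝ (fun y => fderiv ℝ (fun z => f z + g z) y e) x e
      = fderiv ℝ (fun y => fderiv ℝ f y e) x e + fderiv ℝ (fun y => fderiv ℝ g y e) x e := by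
  have hdf : Differentiable ℝ f := hf.differentiable two_ne_zero
  have hdg : Differentiable ℝ g := hg.differentiable two_ne_zero
  have h1 : (fun y => fderiv ℝ (fun z => f z + g z) y e)
      = fun y => fderiv ℝ f y e + fderiv ℝ g y e := by
    funext y; rw [fderiv_fun_add (hdf y) (hdg y)]; simp
  rw [h1, fderiv_fun_add (fderiv_apply_differentiable f hf e x) (fderiv_apply_differentiable g hg e x)]
  simp

lemma D2_sub (f g : E → ℝ) (hf : ContDiff ℝ 2 f) (hg : ContDiff ℝ 2 g) (x e : E) :
    fderiv ℝ (fun y => fderiv ℝ (fun z => f z - g z) y e) x e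
      = fderiv ℝ (fun y => fderiv ℝ f y e) x e - fderiv ℝ (fun y => fderiv ℝ g y e) x e := by
  have hdf : Differentiable ℝ f := hf.differentiable two_ne_zero
  have hdg : Differentiable ℝ g := hg.differentiable two_ne_zero
  have h1 : (fun y => fderiv ℝ (fun z => f z - g z) y e)
      = fun y => fderiv ℝ f y e - fderiv ℝ g y e := by
    funext y; rw [fderiv_fun_sub (hdf y) (hdg y)]; simp
  rw [h1, fderiv_fun_sub (fderiv_apply_differentiable f hf e x) (fderiv_apply_differentiable g hg e x)]
  simp

lemma D2_sq (u : E → ℝ) (hu : ContDiff ℝ 2 u) (x e : E) :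
    fderiv ℝ (fun y => fderiv ℝ (fun z => u z ^ 2) y e) x e
      = 2 * (fderiv ℝ u x e)^2 + 2 * u x * fderiv ℝ (fun y => fderiv ℝ u y e) x e := by
  have hdu : Differentiable ℝ u := hu.differentiable two_ne_zero
  have h1 : (fun y => fderiv ℝ (fun z => u z ^ 2) y e) = fun y => 2 * u y * fderiv ℝ u y e := by
    funext y
    have h : (fun z => u z ^ 2) = fun z => u z * u z := by funext z; ring
    rw [h, fderiv_fun_mul (hdu y) (hdu y)]; simp; ring
  rw [h1]
  have hg := fderiv_apply_differentiable u hu e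
  have h2 : DifferentiableAt ℝ (fun y => 2 * u y) x := (hdu x).const_mul 2
  rw [fderiv_fun_mul h2 (hg x)]
  simp [fderiv_const_mul (hdu x)]
  ring

lemma second_deriv_test (f : E → ℝ) (hf : ContDiff ℝ 2 f) (x₀ : E)
    (hmax : ∀ x, f x ≤ f x₀) (e : E) :
    fderiv ℝ (fun y => fderiv ℝ f y e) x₀ e ≤ 0 := by
  set g : E → ℝ := fun y => fderiv ℝ f y e with hgdef
  set L : ℝ → E := fun t => x₀ + t • e with hLdef
  have hLc : Continuous L := continuous_const.add (continuous_id.smul continuous_const)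
  have hL : ∀ t, HasDerivAt L e t := fun t => by
    simpa [hLdef] using ((hasDerivAt_id t).smul_const e).const_add x₀
  have hL0 : L 0 = x₀ := by simp [hLdef]
  have hdf : Differentiable ℝ f := hf.differentiable two_ne_zero
  have hgC1 : ContDiff ℝ 1 g := by
    have h1 : ContDiff ℝ 1 (fderiv ℝ f) := hf.fderiv_right (by norm_num)
    exact (ContinuousLinearMap.apply ℝ ℝ e).contDiff.comp h1
  have hg : Differentiable ℝ g := hgC1.differentiable one_ne_zero
  set φ : ℝ → ℝ := fun t => f (L t) with hφdef
  have hφ' : ∀ t, HasDerivAt φ (g (L t)) t := fun t =>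
    (hdf (L t)).hasFDerivAt.comp_hasDerivAt t (hL t)
  have hderiv : deriv φ = fun t => g (L t) := funext fun t => (hφ' t).deriv
  set ψ : ℝ → ℝ := fun t => fderiv ℝ g (L t) e with hψdef
  have hφ'' : ∀ t, HasDerivAt (fun s => g (L s)) (ψ t) t := fun t =>
    (hg (L t)).hasFDerivAt.comp_hasDerivAt t (hL t)
  have hderiv2 : ∀ t, deriv (deriv φ) t = ψ t := fun t => by
    rw [hderiv]; exact (hφ'' t).deriv
  have hψc : Continuous ψ := by
    have h1 : Continuous (fderiv ℝ g) := hgC1.continuous_fderiv one_ne_zero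
    exact ((ContinuousLinearMap.apply ℝ ℝ e).continuous.comp h1).comp hLc
  have hgoal : fderiv ℝ (fun y => fderiv ℝ f y e) x₀ e = ψ 0 := by
    simp only [hψdef, hL0, hgdef]
  rw [hgoal]
  by_contra hpos
  push_neg at hpos
  have hnh : ψ ⁻¹' Set.Ioi 0 ∈ nhds (0:ℝ) :=
    hψc.continuousAt.preimage_mem_nhds (Ioi_mem_nhds hpos)
  obtain ⟨δ, hδ, hball⟩ := Metric.mem_nhds_iff.mp hnh
  set r := δ/2 with hr
  have hr0 : 0 < r := by positivity
  have hsub : Set.Icc (0:ℝ) r ⊆ Metric.ball 0 δ := by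
    intro t ht
    simp only [Metric.mem_ball, Real.dist_eq, sub_zero]
    rw [abs_of_nonneg ht.1]
    have := ht.2; simp only [hr] at this ⊢; linarith
  have hψpos : ∀ t ∈ Set.Icc (0:ℝ) r, 0 < ψ t := fun t ht => hball (hsub ht)
  have hφ'cont : Continuous (deriv φ) := by
    rw [hderiv]; exact (hg.continuous).comp hLc
  have hmono : StrictMonoOn (deriv φ) (Set.Icc 0 r) := by
    apply strictMonoOn_of_deriv_pos (convex_Icc 0 r) hφ'cont.continuousOn
    intro t ht
    rw [interior_Icc] at ht
    rw [hderiv2 t]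
    exact hψpos t ⟨ht.1.le, ht.2.le⟩
  have hlocmax : IsLocalMax φ 0 := by
    apply Filter.Eventually.of_forall
    intro t
    have := hmax (L t)
    simpa [hφdef, hL0] using this
  have hd0 : deriv φ 0 = 0 := hlocmax.deriv_eq_zero
  have hφ'pos : ∀ t ∈ Set.Ioo (0:ℝ) r, 0 < deriv φ t := by
    intro t ht
    have := hmono ⟨le_refl 0, hr0.le⟩ ⟨ht.1.le, ht.2.le⟩ ht.1
    rw [hd0] at this; exact this
  have hmono2 : StrictMonoOn φ (Set.Icc 0 r) := by
    apply strictMonoOn_of_deriv_pos (convex_Icc 0 r)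
    · exact ((hdf.continuous).comp hLc).continuousOn
    · intro t ht
      rw [interior_Icc] at ht
      exact hφ'pos t ht
  have hlt : φ 0 < φ r := hmono2 ⟨le_refl 0, hr0.le⟩ ⟨hr0.le, le_refl r⟩ hr0
  have h2 := hmax (L r)
  rw [← hL0] at h2
  exact absurd h2 (not_le.mpr hlt)

end Helpers

section Inner
variable {F : Type*} [NormedAddCommGroup F] [InnerProductSpace ℝ F]

lemma D2_inner_self (x e : F) :
    fderiv ℝ (fun y => fderiv ℝ (fun z : F => ⟪z, z⟫) y e) x e = 2 * ⟪e, e⟫ := by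
  have h1 : (fun y => fderiv ℝ (fun z : F => ⟪z, z⟫) y e) = fun y => 2 * ⟪e, y⟫ := by
    funext y
    rw [fderiv_inner_apply ℝ (differentiableAt_fun_id) (differentiableAt_fun_id)]
    simp [real_inner_comm]
    ring
  rw [h1]
  have hd : DifferentiableAt ℝ (fun y : F => ⟪e, y⟫) x :=
    (differentiableAt_const e).inner ℝ differentiableAt_fun_id
  rw [fderiv_const_mul hd]
  have h3 : fderiv ℝ (fun y : F => ⟪e, y⟫) x e = ⟪e, e⟫ := by
    rw [fderiv_inner_apply ℝ (differentiableAt_const e) differentiableAt_fun_id]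
    simp
  simp [h3]

end Inner

section MaxExists
variable {E : Type*} [NormedAddCommGroup E] [NormedSpace ℝ E] [ProperSpace E]

lemma exists_global_max (f : E → ℝ) (hc : Continuous f) (K ε : ℝ) (hε : 0 < ε)
    (hb : ∀ x, f x ≤ K - ε * ‖x‖^2) : ∃ x₀, ∀ x, f x ≤ f x₀ := by
  set R := Real.sqrt (max 0 ((K - f 0)/ε)) with hRdef
  have hR0 : 0 ≤ R := Real.sqrt_nonneg _
  have hR2 : K - f 0 ≤ ε * R^2 := by
    have h1 : R^2 = max 0 ((K - f 0)/ε) := Real.sq_sqrt (le_max_left _ _)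
    rw [h1]
    have h2 : (K - f 0)/ε ≤ max 0 ((K - f 0)/ε) := le_max_right _ _
    have h3 := mul_le_mul_of_nonneg_left h2 hε.le
    rw [mul_div_cancel₀ _ hε.ne'] at h3
    exact h3
  have h0mem : (0:E) ∈ Metric.closedBall (0:E) R := by
    simpa [Metric.mem_closedBall] using hR0
  obtain ⟨x₀, hx₀mem, hx₀⟩ := (isCompact_closedBall (0:E) R).exists_isMaxOn ⟨0, h0mem⟩
    hc.continuousOn
  refine ⟨x₀, fun x => ?_⟩
  by_cases hx : x ∈ Metric.closedBall 0 R
  · exact hx₀ hx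
  · have h1 : R ≤ ‖x‖ := by
      simp only [Metric.mem_closedBall, dist_zero_right, not_le] at hx
      exact hx.le
    have h2 : R^2 ≤ ‖x‖^2 := pow_le_pow_left₀ hR0 h1 2
    have h3 : f x ≤ f 0 := by nlinarith [hb x]
    exact h3.trans (hx₀ h0mem)

end MaxExists

lemma key_alg (s₁ s₂ g12 μ ε N : ℝ) (hs₁ : 0 < s₁) (hs₂ : 0 < s₂) (hμ : 0 < μ)
    (hε : 0 < ε) (hN : 0 ≤ N) (hg : s₁*s₂ ≤ g12) (A B α β m : ℝ)
    (hα : α = μ/s₁) (hβ : β = μ/s₂) (hm : m = min s₁ s₂)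
    (hkey : α⁻¹*2*A*(s₁^2*(A^2 - α)*A + g12*A*B^2)
          + β⁻¹*2*B*(s₂^2*(B^2 - β)*B + g12*A^2*B) ≤ N*(2*ε)) :
    A^2/α + B^2/β ≤ 1 + N*ε/(μ*m) := by
  have hm0 : 0 < m := by rw [hm]; exact lt_min hs₁ hs₂
  have hm1 : m ≤ s₁ := by rw [hm]; exact min_le_left _ _
  have hm2 : m ≤ s₂ := by rw [hm]; exact min_le_right _ _
  have expand : α⁻¹*2*A*(s₁^2*(A^2 - α)*A + g12*A*B^2)
          + β⁻¹*2*B*(s₂^2*(B^2 - β)*B + g12*A^2*B)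
      = (2/μ) * (s₁*A^2*(s₁^2*A^2 - μ*s₁ + g12*B^2) + s₂*B^2*(s₂^2*B^2 - μ*s₂ + g12*A^2)) := by
    subst hα hβ
    field_simp
  rw [expand] at hkey
  have hkey2 : s₁*A^2*(s₁^2*A^2 - μ*s₁ + g12*B^2) + s₂*B^2*(s₂^2*B^2 - μ*s₂ + g12*A^2)
      ≤ N*ε*μ := by
    have h := mul_le_mul_of_nonneg_left hkey (by positivity : (0:ℝ) ≤ μ/2)
    have e : (μ/2) * ((2/μ) * (s₁*A^2*(s₁^2*A^2 - μ*s₁ + g12*B^2)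
        + s₂*B^2*(s₂^2*B^2 - μ*s₂ + g12*A^2)))
        = s₁*A^2*(s₁^2*A^2 - μ*s₁ + g12*B^2) + s₂*B^2*(s₂^2*B^2 - μ*s₂ + g12*A^2) := by
      field_simp
    rw [e] at h
    linarith [h]
  have hmain : (s₁^2*A^2+s₂^2*B^2) * (s₁*A^2+s₂*B^2-μ) ≤ N*ε*μ := by
    nlinarith [hkey2, mul_nonneg (mul_nonneg (mul_nonneg (sub_nonneg.mpr hg)
      (by positivity : (0:ℝ) ≤ s₁+s₂)) (sq_nonneg A)) (sq_nonneg B)]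
  have hge : A^2/α + B^2/β = (s₁*A^2+s₂*B^2)/μ := by
    subst hα hβ; field_simp
  rw [hge]
  by_cases hw : s₁*A^2+s₂*B^2 ≤ μ
  · have h1 : (s₁*A^2+s₂*B^2)/μ ≤ 1 := by rw [div_le_one hμ]; exact hw
    have h2 : 0 ≤ N*ε/(μ*m) := by positivity
    linarith
  · push_neg at hw
    have hA2 : 0 ≤ A^2 := sq_nonneg A
    have hB2 : 0 ≤ B^2 := sq_nonneg B
    have t1 : m*(s₁*A^2) ≤ s₁*(s₁*A^2) := mul_le_mul_of_nonneg_right hm1 (by positivity)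
    have t2 : m*(s₂*B^2) ≤ s₂*(s₂*B^2) := mul_le_mul_of_nonneg_right hm2 (by positivity)
    have t3 : m*μ ≤ m*(s₁*A^2+s₂*B^2) := mul_le_mul_of_nonneg_left hw.le hm0.le
    have h5 : m*μ ≤ s₁^2*A^2 + s₂^2*B^2 := by nlinarith [t1, t2, t3]
    have h6 : m*μ*(s₁*A^2+s₂*B^2-μ) ≤ N*ε*μ := by
      have := mul_le_mul_of_nonneg_right h5 (by linarith : (0:ℝ) ≤ s₁*A^2+s₂*B^2-μ)
      linarith [hmain]
    have hfinal : m*(s₁*A^2+s₂*B^2-μ) ≤ N*ε := by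
      have h7 : μ*(m*(s₁*A^2+s₂*B^2-μ)) ≤ μ*(N*ε) := by nlinarith [h6]
      exact le_of_mul_le_mul_left h7 hμ
    rw [div_le_iff₀ hμ]
    have e2 : (1 + N*ε/(μ*m))*μ = μ + N*ε/m := by field_simp
    rw [e2]
    have h9 : s₁*A^2+s₂*B^2-μ ≤ N*ε/m := by rw [le_div_iff₀ hm0]; nlinarith [hfinal]
    linarith

/-- Scalar Laplacian of a function `ℝⁿ → ℝ`. -/
noncomputable def scalarLaplacian {n : ℕ}
    (V : EuclideanSpace ℝ (Fin n) → ℝ) (x : EuclideanSpace ℝ (Fin n)) : ℝ :=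
  ∑ i : Fin n, fderiv ℝ (fun y => fderiv ℝ V y (EuclideanSpace.single i 1)) x
    (EuclideanSpace.single i 1)

theorem gross_pitaevskii_ellipse_bound {n : ℕ}
    (g11 g22 g12 μ : ℝ) (hg11 : 0 < g11) (hg22 : 0 < g22) (hg12 : 0 < g12) (hμ : 0 < μ)
    (hseg : g12 > Real.sqrt (g11 * g22))
    (a b : ℝ) (ha : a = Real.sqrt μ / g11 ^ ((1:ℝ)/4)) (hb : b = Real.sqrt μ / g22 ^ ((1:ℝ)/4))
    (u₁ u₂ : EuclideanSpace ℝ (Fin n) → ℝ)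
    (hu₁ : ContDiff ℝ 2 u₁) (hu₂ : ContDiff ℝ 2 u₂)
    (hbdd : ∃ C : ℝ, ∀ x, |u₁ x| ≤ C ∧ |u₂ x| ≤ C)
    (hsol₁ : ∀ x, scalarLaplacian u₁ x = g11 * (u₁ x ^ 2 - a ^ 2) * u₁ x + g12 * u₁ x * u₂ x ^ 2)
    (hsol₂ : ∀ x, scalarLaplacian u₂ x = g22 * (u₂ x ^ 2 - b ^ 2) * u₂ x + g12 * u₁ x ^ 2 * u₂ x) :
    ∀ x, u₁ x ^ 2 / a ^ 2 + u₂ x ^ 2 / b ^ 2 ≤ 1 := by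
  intro x
  obtain ⟨C, hC⟩ := hbdd
  set s₁ := Real.sqrt g11 with hs₁def
  set s₂ := Real.sqrt g22 with hs₂def
  have hs₁ : 0 < s₁ := Real.sqrt_pos.mpr hg11
  have hs₂ : 0 < s₂ := Real.sqrt_pos.mpr hg22
  have hg11e : g11 = s₁^2 := (Real.sq_sqrt hg11.le).symm
  have hg22e : g22 = s₂^2 := (Real.sq_sqrt hg22.le).symm
  have hsegm : s₁*s₂ ≤ g12 := by
    rw [hs₁def, hs₂def, ← Real.sqrt_mul hg11.le]; exact hseg.le
  have ha2 : a^2 = μ/s₁ := by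
    rw [ha, div_pow, Real.sq_sqrt hμ.le]
    congr 1
    rw [← Real.rpow_natCast (g11 ^ ((1:ℝ)/4)) 2, ← Real.rpow_mul hg11.le, hs₁def,
      Real.sqrt_eq_rpow]
    norm_num
  have hb2 : b^2 = μ/s₂ := by
    rw [hb, div_pow, Real.sq_sqrt hμ.le]
    congr 1
    rw [← Real.rpow_natCast (g22 ^ ((1:ℝ)/4)) 2, ← Real.rpow_mul hg22.le, hs₂def,
      Real.sqrt_eq_rpow]
    norm_num
  have ha2pos : 0 < a^2 := by rw [ha2]; positivity
  have hb2pos : 0 < b^2 := by rw [hb2]; positivity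
  set m := min s₁ s₂ with hmdef
  have hm0 : 0 < m := lt_min hs₁ hs₂
  have hsq1 : ∀ y, u₁ y ^ 2 ≤ C^2 := fun y => by
    have h := abs_le.mp (hC y).1; exact sq_le_sq' h.1 h.2
  have hsq2 : ∀ y, u₂ y ^ 2 ≤ C^2 := fun y => by
    have h := abs_le.mp (hC y).2; exact sq_le_sq' h.1 h.2
  set K : ℝ := (a^2)⁻¹*C^2 + (b^2)⁻¹*C^2 with hKdef
  have hw1 : ContDiff ℝ 2 (fun z => (a^2)⁻¹ * u₁ z ^ 2) := contDiff_const.mul (hu₁.pow 2)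
  have hw2 : ContDiff ℝ 2 (fun z => (b^2)⁻¹ * u₂ z ^ 2) := contDiff_const.mul (hu₂.pow 2)
  have hwsum : ContDiff ℝ 2 (fun z : EuclideanSpace ℝ (Fin n) =>
      (a^2)⁻¹ * u₁ z ^ 2 + (b^2)⁻¹ * u₂ z ^ 2) := hw1.add hw2
  have hQ : ContDiff ℝ 2 (fun z : EuclideanSpace ℝ (Fin n) => ⟪z, z⟫) :=
    contDiff_id.inner ℝ contDiff_id
  have c1 : (0:ℝ) ≤ (a^2)⁻¹ := by positivity
  have c2 : (0:ℝ) ≤ (b^2)⁻¹ := by positivity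
  have main : ∀ ε : ℝ, 0 < ε →
      (a^2)⁻¹*u₁ x ^2 + (b^2)⁻¹*u₂ x ^2 ≤ 1 + (n:ℝ)*ε/(μ*m) + ε*‖x‖^2 := by
    intro ε hε
    have hF : ContDiff ℝ 2 (fun z : EuclideanSpace ℝ (Fin n) =>
        (a^2)⁻¹ * u₁ z ^ 2 + (b^2)⁻¹ * u₂ z ^ 2 - ε * ⟪z, z⟫) :=
      hwsum.sub (contDiff_const.mul hQ)
    have hFb : ∀ y : EuclideanSpace ℝ (Fin n),
        (a^2)⁻¹ * u₁ y ^ 2 + (b^2)⁻¹ * u₂ y ^ 2 - ε * ⟪y, y⟫ ≤ K - ε * ‖y‖^2 := by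
      intro y
      rw [real_inner_self_eq_norm_sq y, hKdef]
      have h1 := hsq1 y; have h2 := hsq2 y
      linarith [mul_le_mul_of_nonneg_left h1 c1, mul_le_mul_of_nonneg_left h2 c2]
    obtain ⟨x₀, hx₀⟩ := exists_global_max _ hF.continuous K ε hε hFb
    have hper : ∀ i : Fin n,
        ((a^2)⁻¹ * (2*u₁ x₀)) * fderiv ℝ (fun y => fderiv ℝ u₁ y (EuclideanSpace.single i 1))
          x₀ (EuclideanSpace.single i 1)
        + ((b^2)⁻¹ * (2*u₂ x₀)) * fderiv ℝ (fun y => fderiv ℝ u₂ y (EuclideanSpace.single i 1))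
          x₀ (EuclideanSpace.single i 1) ≤ 2*ε := by
      intro i
      set e : EuclideanSpace ℝ (Fin n) := EuclideanSpace.single i 1 with hedef
      have hee : ⟪e, e⟫ = (1:ℝ) := by
        simp [hedef, EuclideanSpace.inner_single_left, EuclideanSpace.single_apply]
      have htest := second_deriv_test _ hF x₀ hx₀ e
      have h1 := D2_sub (fun z => (a^2)⁻¹ * u₁ z ^ 2 + (b^2)⁻¹ * u₂ z ^ 2)
        (fun z : EuclideanSpace ℝ (Fin n) => ε * ⟪z, z⟫) hwsum (contDiff_const.mul hQ) x₀ e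
      have h2 := D2_add (fun z => (a^2)⁻¹ * u₁ z ^ 2) (fun z => (b^2)⁻¹ * u₂ z ^ 2) hw1 hw2 x₀ e
      have h3 := D2_const_mul (fun z => u₁ z ^ 2) (hu₁.pow 2) ((a^2)⁻¹) x₀ e
      have h4 := D2_const_mul (fun z => u₂ z ^ 2) (hu₂.pow 2) ((b^2)⁻¹) x₀ e
      have h5 := D2_const_mul (fun z : EuclideanSpace ℝ (Fin n) => ⟪z, z⟫) hQ ε x₀ e
      have h6 := D2_sq u₁ hu₁ x₀ e
      have h7 := D2_sq u₂ hu₂ x₀ e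
      have h8 := D2_inner_self x₀ e
      rw [h1, h2, h3, h4, h5, h6, h7, h8, hee] at htest
      linarith [htest, mul_nonneg c1 (sq_nonneg (fderiv ℝ u₁ x₀ e)),
        mul_nonneg c2 (sq_nonneg (fderiv ℝ u₂ x₀ e))]
    have hlap : ((a^2)⁻¹ * (2*u₁ x₀)) * scalarLaplacian u₁ x₀
        + ((b^2)⁻¹ * (2*u₂ x₀)) * scalarLaplacian u₂ x₀ ≤ (n:ℝ)*(2*ε) := by
      calc ((a^2)⁻¹ * (2*u₁ x₀)) * scalarLaplacian u₁ x₀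
            + ((b^2)⁻¹ * (2*u₂ x₀)) * scalarLaplacian u₂ x₀
          = ∑ i : Fin n, (((a^2)⁻¹ * (2*u₁ x₀)) * fderiv ℝ
              (fun y => fderiv ℝ u₁ y (EuclideanSpace.single i 1)) x₀ (EuclideanSpace.single i 1)
            + ((b^2)⁻¹ * (2*u₂ x₀)) * fderiv ℝ
              (fun y => fderiv ℝ u₂ y (EuclideanSpace.single i 1)) x₀
              (EuclideanSpace.single i 1)) := by
            simp only [scalarLaplacian, Finset.mul_sum]
            rw [← Finset.sum_add_distrib]
        _ ≤ ∑ _i : Fin n, (2*ε) := Finset.sum_le_sum (fun i _ => hper i)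
        _ = (n:ℝ)*(2*ε) := by
            rw [Finset.sum_const, Finset.card_univ, Fintype.card_fin, nsmul_eq_mul]
    rw [hsol₁ x₀, hsol₂ x₀, hg11e, hg22e] at hlap
    have hkey : (a^2)⁻¹*2*(u₁ x₀)*(s₁^2*((u₁ x₀)^2 - a^2)*(u₁ x₀) + g12*(u₁ x₀)*(u₂ x₀)^2)
        + (b^2)⁻¹*2*(u₂ x₀)*(s₂^2*((u₂ x₀)^2 - b^2)*(u₂ x₀) + g12*(u₁ x₀)^2*(u₂ x₀))
        ≤ (n:ℝ)*(2*ε) := by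
      have heq : (a^2)⁻¹*2*(u₁ x₀)*(s₁^2*((u₁ x₀)^2 - a^2)*(u₁ x₀) + g12*(u₁ x₀)*(u₂ x₀)^2)
        + (b^2)⁻¹*2*(u₂ x₀)*(s₂^2*((u₂ x₀)^2 - b^2)*(u₂ x₀) + g12*(u₁ x₀)^2*(u₂ x₀))
        = ((a^2)⁻¹ * (2*u₁ x₀)) * (s₁^2 * (u₁ x₀ ^ 2 - a ^ 2) * u₁ x₀ + g12 * u₁ x₀ * u₂ x₀ ^ 2)
        + ((b^2)⁻¹ * (2*u₂ x₀)) * (s₂^2 * (u₂ x₀ ^ 2 - b ^ 2) * u₂ x₀ + g12 * u₁ x₀ ^ 2 * u₂ x₀) := by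
        ring
      rw [heq]
      exact hlap
    have halg := key_alg s₁ s₂ g12 μ ε (n:ℝ) hs₁ hs₂ hμ hε (by positivity) hsegm
      (u₁ x₀) (u₂ x₀) (a^2) (b^2) m ha2 hb2 hmdef hkey
    have e1 : (u₁ x₀)^2/(a^2) + (u₂ x₀)^2/(b^2)
        = (a^2)⁻¹*u₁ x₀ ^2 + (b^2)⁻¹*u₂ x₀ ^2 := by ring
    rw [e1] at halg
    have hmax : (a^2)⁻¹ * u₁ x ^ 2 + (b^2)⁻¹ * u₂ x ^ 2 - ε * ⟪x, x⟫
        ≤ (a^2)⁻¹ * u₁ x₀ ^ 2 + (b^2)⁻¹ * u₂ x₀ ^ 2 - ε * ⟪x₀, x₀⟫ := hx₀ x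
    have hinner : (0:ℝ) ≤ ⟪x₀, x₀⟫ := real_inner_self_nonneg
    have hxx : ⟪x, x⟫ = ‖x‖^2 := real_inner_self_eq_norm_sq x
    rw [hxx] at hmax
    linarith [hmax, halg, mul_nonneg hε.le hinner]
  have hfin : (a^2)⁻¹*u₁ x ^2 + (b^2)⁻¹*u₂ x ^2 ≤ 1 := by
    apply le_of_forall_pos_le_add
    intro ε' hε'
    set D : ℝ := (n:ℝ)/(μ*m) + ‖x‖^2 with hDdef
    have hD0 : 0 ≤ D := by positivity
    have hεp : 0 < ε' / (D+1) := by positivity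
    have h := main _ hεp
    have h2 : (n:ℝ)*(ε'/(D+1))/(μ*m) + (ε'/(D+1))*‖x‖^2 = (ε'/(D+1))*D := by
      rw [hDdef]; field_simp
    have h3 : (ε'/(D+1))*D ≤ ε' := by
      rw [div_mul_eq_mul_div, div_le_iff₀ (by linarith : (0:ℝ) < D+1)]
      linarith [hε'.le, mul_le_mul_of_nonneg_left hD0 hε'.le]
    linarith [h, h2.le, h2.ge, h3]
  have efin : u₁ x ^ 2 / a ^ 2 + u₂ x ^ 2 / b ^ 2
      = (a^2)⁻¹*u₁ x ^2 + (b^2)⁻¹*u₂ x ^2 := by ring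
  rw [efin]
  exact hfin
end
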